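/- arXiv:1102.3030 — 6 statements merged into one kernel-verified Lean document; each statement's English description precedes it below -/
import Mathlib

section
/- Let q_1,…,q_{2k} be positive integers with Σ q_i = 2Q, and define β_i = 1 for i ≤ k, β_i = 2 for i > k. Then there exists a permutation π of {1,…,2k} with Σ_i Σ_j q_{π(i)} q_{π(j)} |β_i − β_j| ≥ 2Q² if and only if there exists a subset I ⊆ {1,…,2k} with |I| = k and Σ_{i∈I} q_i = Q. -/
/-- Correctness of the reduction from Partition to the Wiener Max-QAP:
with β_i = 1 for i ≤ k and β_i = 2 for i > k, there is a permutation π of {1,…,2k}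
whose QAP objective is ≥ 2Q² iff there is a k-element subset I with Σ_{i∈I} q_i = Q. -/
theorem stmt2 (k Q : ℕ) (hk : 1 ≤ k) (q : Fin (2 * k) → ℕ)
    (hq : ∀ i, 0 < q i) (hsum : ∑ i, q i = 2 * Q)
    (β : Fin (2 * k) → ℤ) (hβ : ∀ i, β i = if (i : ℕ) < k then 1 else 2) :
    (∃ π : Equiv.Perm (Fin (2 * k)),
        2 * (Q : ℤ) ^ 2 ≤ ∑ i, ∑ j, (q (π i) : ℤ) * (q (π j) : ℤ) * |β i - β j|) ↔
    (∃ I : Finset (Fin (2 * k)), I.card = k ∧ ∑ i ∈ I, q i = Q) := by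
  classical
  set S : Finset (Fin (2 * k)) := Finset.univ.filter (fun i => (i : ℕ) < k) with hSdef
  have hmemS : ∀ i : Fin (2 * k), i ∈ S ↔ (i : ℕ) < k := by
    intro i; simp [hSdef]
  have hScard : S.card = k := by
    have : S = Finset.map ⟨Fin.castLE (by omega), Fin.castLE_injective _⟩ (Finset.univ : Finset (Fin k)) := by
      ext i
      simp only [hmemS, Finset.mem_map, Finset.mem_univ, true_and, Function.Embedding.coeFn_mk]
      constructor
      · intro h; exact ⟨⟨i, h⟩, by ext; simp⟩
      · rintro ⟨j, rfl⟩; exact j.isLt.trans_le (le_refl k) |>.trans_le (le_refl k)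
    rw [this, Finset.card_map, Finset.card_univ, Fintype.card_fin]
  -- key computation
  have key : ∀ f : Fin (2 * k) → ℤ,
      ∑ i, ∑ j, f i * f j * |β i - β j|
        = 2 * (∑ i ∈ S, f i) * (∑ i ∈ Sᶜ, f i) := by
    intro f
    have hb1 : ∀ i ∈ S, β i = 1 := by intro i hi; rw [hβ]; simp [(hmemS i).1 hi]
    have hb2 : ∀ i ∈ Sᶜ, β i = 2 := by
      intro i hi; rw [hβ]; simp [Finset.mem_compl, hmemS] at hi; simp [hi]
    have split : ∀ g : Fin (2 * k) → ℤ, ∑ i, g i = ∑ i ∈ S, g i + ∑ i ∈ Sᶜ, g i :=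
      fun g => (Finset.sum_add_sum_compl S g).symm
    rw [split]
    have e1 : ∑ i ∈ S, ∑ j, f i * f j * |β i - β j|
        = ∑ i ∈ S, ∑ j ∈ Sᶜ, f i * f j := by
      refine Finset.sum_congr rfl fun i hi => ?_
      rw [split]
      have : ∑ j ∈ S, f i * f j * |β i - β j| = 0 := by
        refine Finset.sum_eq_zero fun j hj => by rw [hb1 i hi, hb1 j hj]; simp
      rw [this, zero_add]
      refine Finset.sum_congr rfl fun j hj => by rw [hb1 i hi, hb2 j hj]; norm_num
    have e2 : ∑ i ∈ Sᶜ, ∑ j, f i * f j * |β i - β j|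
        = ∑ i ∈ Sᶜ, ∑ j ∈ S, f i * f j := by
      refine Finset.sum_congr rfl fun i hi => ?_
      rw [split]
      have : ∑ j ∈ Sᶜ, f i * f j * |β i - β j| = 0 := by
        refine Finset.sum_eq_zero fun j hj => by rw [hb2 i hi, hb2 j hj]; simp
      rw [this, add_zero]
      refine Finset.sum_congr rfl fun j hj => by rw [hb2 i hi, hb1 j hj]; norm_num
    rw [e1, e2, ← Finset.sum_mul_sum, ← Finset.sum_mul_sum]
    ring
  constructor
  · rintro ⟨π, hπ⟩
    rw [key] at hπ
    set A : ℕ := ∑ i ∈ S, q (π i) with hA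
    set B : ℕ := ∑ i ∈ Sᶜ, q (π i) with hB
    have hAB : A + B = 2 * Q := by
      rw [hA, hB, Finset.sum_add_sum_compl]
      rw [← hsum]
      exact Equiv.sum_comp π q
    have hcast : (∑ i ∈ S, (q (π i) : ℤ)) = (A : ℤ) ∧ (∑ i ∈ Sᶜ, (q (π i) : ℤ)) = (B : ℤ) := by
      constructor <;> push_cast [hA, hB] <;> ring
    rw [hcast.1, hcast.2] at hπ
    have hABZ : (A : ℤ) + B = 2 * Q := by exact_mod_cast congrArg (Nat.cast : ℕ → ℤ) hAB
    have hAQ : (A : ℤ) = Q := by nlinarith [sq_nonneg ((A : ℤ) - Q)]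
    refine ⟨S.image π, ?_, ?_⟩
    · rw [Finset.card_image_of_injective _ π.injective, hScard]
    · rw [Finset.sum_image (fun a _ b _ h => π.injective h)]
      exact_mod_cast hAQ
  · rintro ⟨I, hIc, hIs⟩
    have hc1 : S.card = I.card := by rw [hScard, hIc]
    have hc2 : (Sᶜ : Finset (Fin (2 * k))).card = (Iᶜ : Finset (Fin (2 * k))).card := by
      rw [Finset.card_compl, Finset.card_compl, hScard, hIc]
    let e1 : {x // x ∈ S} ≃ {x // x ∈ I} := Finset.equivOfCardEq hc1
    let e2 : {x // ¬ x ∈ S} ≃ {x // ¬ x ∈ I} :=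
      ((Equiv.subtypeEquivRight (fun x => (Finset.mem_compl (s := S)).symm)).trans
        (Finset.equivOfCardEq hc2)).trans (Equiv.subtypeEquivRight fun x => Finset.mem_compl)
    let π : Equiv.Perm (Fin (2 * k)) := Equiv.subtypeCongr e1 e2
    have hπS : ∀ i ∈ S, π i ∈ I := by
      intro i hi
      have : π i = (e1 ⟨i, hi⟩ : Fin (2 * k)) := by
        simp [π, Equiv.subtypeCongr, hi]
      rw [this]; exact (e1 ⟨i, hi⟩).2
    have hπSc : ∀ i, i ∉ S → π i ∉ I := by
      intro i hi
      have : π i = (e2 ⟨i, hi⟩ : Fin (2 * k)) := by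
        simp [π, Equiv.subtypeCongr, hi]
      rw [this]; exact (e2 ⟨i, hi⟩).2
    have hsumS : ∑ i ∈ S, q (π i) = Q := by
      rw [← hIs]
      refine Finset.sum_nbij' (fun i => π i) (fun x => π.symm x) hπS ?_ ?_ ?_ ?_
      · intro x hx
        by_contra h
        exact hπSc _ h (by simpa using hx)
      · intro i _; simp
      · intro x _; simp
      · intro i _; rfl
    have hsumSc : ∑ i ∈ Sᶜ, q (π i) = Q := by
      have htot : ∑ i ∈ S, q (π i) + ∑ i ∈ Sᶜ, q (π i) = 2 * Q := by
        rw [Finset.sum_add_sum_compl, ← hsum]; exact Equiv.sum_comp π q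
      omega
    refine ⟨π, ?_⟩
    rw [key]
    have h1 : (∑ i ∈ S, (q (π i) : ℤ)) = (Q : ℤ) := by exact_mod_cast congrArg (Nat.cast : ℕ → ℤ) hsumS
    have h2 : (∑ i ∈ Sᶜ, (q (π i) : ℤ)) = (Q : ℤ) := by exact_mod_cast congrArg (Nat.cast : ℕ → ℤ) hsumSc
    rw [h1, h2]; ring_nf; exact le_refl _
end

section
/- Every instance of the Wiener Max-QAP possesses an optimal permutation that is V-shaped: there exists a permutation π maximizing Z_π(A,B) and an index ℓ with 1 ≤ ℓ ≤ n such that π(i) > π(i+1) for all i < ℓ and π(i) < π(i+1) for all i ≥ ℓ. -/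
namespace Stmt4Aux

open Finset

variable {n : ℕ}

def Zf (β : Fin n → ℤ) (f : Fin n → ℤ) : ℤ := ∑ i, ∑ j, f i * f j * |β i - β j|

def Lf (f : Fin n → ℤ) (t : ℕ) : ℤ := ∑ i : Fin n, if (i : ℕ) ≤ t then f i else 0

def Tf (f : Fin n → ℤ) : ℤ := ∑ i, f i

def dβ (β : Fin n → ℤ) (t : ℕ) : ℤ :=
  if h : t + 1 < n then β ⟨t+1, h⟩ - β ⟨t, Nat.lt_of_succ_lt h⟩ else 0

def Φf (f : Fin n → ℤ) : ℤ := ∑ t ∈ range (n-1), Lf f t * (Tf f - Lf f t)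

def Ψf (f : Fin n → ℤ) : ℤ := ∑ t ∈ range (n-1), Lf f t

lemma dβ_nonneg {β : Fin n → ℤ} (hβ : Monotone β) (t : ℕ) : 0 ≤ dβ β t := by
  unfold dβ
  split
  · exact sub_nonneg.2 (hβ (by simp [Fin.le_def]))
  · exact le_refl 0

def G (β : Fin n → ℤ) (t : ℕ) : ℤ := if h : t < n then β ⟨t, h⟩ else 0

lemma dβ_eq {β : Fin n → ℤ} {t : ℕ} (h : t + 1 < n) : dβ β t = G β (t+1) - G β t := by
  simp [dβ, G, h, show t < n by omega]

lemma sum_Ico_dβ {β : Fin n → ℤ} {i j : ℕ} (hij : i ≤ j) (hj : j < n) :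
    ∑ t ∈ Finset.Ico i j, dβ β t = β ⟨j, hj⟩ - β ⟨i, by omega⟩ := by
  have h1 : ∑ t ∈ Finset.Ico i j, dβ β t = ∑ t ∈ Finset.Ico i j, (G β (t+1) - G β t) := by
    refine sum_congr rfl fun t ht => ?_
    rw [mem_Ico] at ht
    exact dβ_eq (by omega)
  rw [h1, Finset.sum_Ico_eq_sub _ hij, Finset.sum_range_sub (G β), Finset.sum_range_sub (G β)]
  simp only [G, dif_pos hj, dif_pos (show i < n by omega)]
  ring

lemma half {β : Fin n → ℤ} (i j : Fin n) (hij : (i:ℕ) ≤ j) :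
    β j - β i = ∑ t ∈ range (n-1), if (i:ℕ) ≤ t ∧ t < (j:ℕ) then dβ β t else 0 := by
  rw [← Finset.sum_filter]
  have h2 : Finset.filter (fun t => (i:ℕ) ≤ t ∧ t < (j:ℕ)) (range (n-1))
      = Finset.Ico (i:ℕ) (j:ℕ) := by
    ext t
    simp only [mem_filter, mem_range, mem_Ico]
    have := j.isLt
    omega
  rw [h2, sum_Ico_dβ hij j.isLt]

lemma abs_pair {β : Fin n → ℤ} (hβ : Monotone β) (i j : Fin n) :
    |β i - β j| = ∑ t ∈ range (n-1),
      if ((i:ℕ) ≤ t ∧ t < (j:ℕ)) ∨ ((j:ℕ) ≤ t ∧ t < (i:ℕ)) then dβ β t else 0 := by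
  rcases le_total (i:ℕ) (j:ℕ) with hij | hij
  · have hb : β i ≤ β j := hβ (Fin.le_def.mpr hij)
    rw [abs_sub_comm, abs_of_nonneg (sub_nonneg.2 hb), half i j hij]
    refine sum_congr rfl fun t _ => ?_
    rw [if_congr (show ((i:ℕ) ≤ t ∧ t < (j:ℕ)) ↔
      (((i:ℕ) ≤ t ∧ t < (j:ℕ)) ∨ ((j:ℕ) ≤ t ∧ t < (i:ℕ))) by omega) rfl rfl]
  · have hb : β j ≤ β i := hβ (Fin.le_def.mpr hij)
    rw [abs_of_nonneg (sub_nonneg.2 hb), half j i hij]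
    refine sum_congr rfl fun t _ => ?_
    rw [if_congr (show ((j:ℕ) ≤ t ∧ t < (i:ℕ)) ↔
      (((i:ℕ) ≤ t ∧ t < (j:ℕ)) ∨ ((j:ℕ) ≤ t ∧ t < (i:ℕ))) by omega) rfl rfl]

lemma sum_gt (f : Fin n → ℤ) (t : ℕ) :
    ∑ i : Fin n, (if t < (i:ℕ) then f i else 0) = Tf f - Lf f t := by
  rw [Tf, Lf, ← Finset.sum_sub_distrib]
  refine sum_congr rfl fun i _ => ?_
  by_cases h : (i:ℕ) ≤ t
  · simp [h, show ¬ t < (i:ℕ) by omega]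
  · simp [h, show t < (i:ℕ) by omega]

lemma cut {β : Fin n → ℤ} (hβ : Monotone β) (f : Fin n → ℤ) :
    Zf β f = ∑ t ∈ range (n-1), dβ β t * (2 * (Lf f t * (Tf f - Lf f t))) := by
  have fact : ∀ (A B : Fin n → ℤ) (d : ℤ),
      (∑ i : Fin n, ∑ j : Fin n, A i * B j * d) = (∑ i : Fin n, A i) * (∑ j : Fin n, B j) * d := by
    intro A B d
    simp only [← Finset.sum_mul]
    rw [Finset.sum_mul_sum]
  unfold Zf
  calc
    ∑ i : Fin n, ∑ j : Fin n, f i * f j * |β i - β j|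
      = ∑ i : Fin n, ∑ j : Fin n, ∑ t ∈ range (n-1),
          (if ((i:ℕ) ≤ t ∧ t < (j:ℕ)) ∨ ((j:ℕ) ≤ t ∧ t < (i:ℕ)) then f i * f j * dβ β t else 0) := by
        refine sum_congr rfl fun i _ => sum_congr rfl fun j _ => ?_
        rw [abs_pair hβ i j, Finset.mul_sum]
        refine sum_congr rfl fun t _ => ?_
        split <;> simp
    _ = ∑ i : Fin n, ∑ t ∈ range (n-1), ∑ j : Fin n,
          (if ((i:ℕ) ≤ t ∧ t < (j:ℕ)) ∨ ((j:ℕ) ≤ t ∧ t < (i:ℕ)) then f i * f j * dβ β t else 0) :=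
        sum_congr rfl fun i _ => Finset.sum_comm
    _ = ∑ t ∈ range (n-1), ∑ i : Fin n, ∑ j : Fin n,
          (if ((i:ℕ) ≤ t ∧ t < (j:ℕ)) ∨ ((j:ℕ) ≤ t ∧ t < (i:ℕ)) then f i * f j * dβ β t else 0) :=
        Finset.sum_comm
    _ = ∑ t ∈ range (n-1), dβ β t * (2 * (Lf f t * (Tf f - Lf f t))) := by
        refine sum_congr rfl fun t _ => ?_
        have split1 : ∀ i j : Fin n,
            (if ((i:ℕ) ≤ t ∧ t < (j:ℕ)) ∨ ((j:ℕ) ≤ t ∧ t < (i:ℕ)) then f i * f j * dβ β t else 0)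
            = (if (i:ℕ) ≤ t then f i else 0) * (if t < (j:ℕ) then f j else 0) * dβ β t
              + (if (j:ℕ) ≤ t then f j else 0) * (if t < (i:ℕ) then f i else 0) * dβ β t := by
          intro i j
          by_cases h1 : (i:ℕ) ≤ t <;> by_cases h3 : (j:ℕ) ≤ t
          · simp [h1, h3, show ¬ t < (j:ℕ) by omega, show ¬ t < (i:ℕ) by omega]
          · simp [h1, h3, show t < (j:ℕ) by omega, show ¬ t < (i:ℕ) by omega]
          · simp [h1, h3, show ¬ t < (j:ℕ) by omega, show t < (i:ℕ) by omega]
            exact Or.inl (mul_comm _ _)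
          · simp [h1, h3, show t < (j:ℕ) by omega, show t < (i:ℕ) by omega]
        simp only [split1, Finset.sum_add_distrib]
        rw [fact (fun i => if (i:ℕ) ≤ t then f i else 0)
            (fun j => if t < (j:ℕ) then f j else 0) (dβ β t)]
        have comm : (∑ i : Fin n, ∑ j : Fin n,
              (if (j:ℕ) ≤ t then f j else 0) * (if t < (i:ℕ) then f i else 0) * dβ β t)
            = ∑ j : Fin n, ∑ i : Fin n,
              (if (j:ℕ) ≤ t then f j else 0) * (if t < (i:ℕ) then f i else 0) * dβ β t :=
          Finset.sum_comm
        rw [comm, fact (fun j => if (j:ℕ) ≤ t then f j else 0)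
            (fun i => if t < (i:ℕ) then f i else 0) (dβ β t)]
        rw [sum_gt f t]
        unfold Lf
        ring

lemma sum_update_single {s : Finset ℕ} {u : ℕ} (hu : u ∈ s) {h h' : ℕ → ℤ}
    (hh : ∀ t ∈ s, t ≠ u → h' t = h t) :
    ∑ t ∈ s, h' t = ∑ t ∈ s, h t + (h' u - h u) := by
  rw [← Finset.sum_erase_add s h' hu, ← Finset.sum_erase_add s h hu]
  have e : ∑ t ∈ s.erase u, h' t = ∑ t ∈ s.erase u, h t :=
    sum_congr rfl fun t ht => hh t (mem_of_mem_erase ht) (ne_of_mem_erase ht)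
  rw [e]; ring

lemma Tf_comp (f : Fin n → ℤ) (e : Equiv.Perm (Fin n)) : Tf (f ∘ e) = Tf f :=
  Equiv.sum_comp e f

lemma Lf_swap_ne (f : Fin n → ℤ) {a b : Fin n} {u t : ℕ} (ha : (a:ℕ) = u)
    (hb : (b:ℕ) = u + 1) (ht : t ≠ u) :
    Lf (f ∘ (Equiv.swap a b)) t = Lf f t := by
  have key : ∀ i : Fin n, (((Equiv.swap a b) i : Fin n) : ℕ) ≤ t ↔ (i : ℕ) ≤ t := by
    intro i
    by_cases h1 : i = a
    · subst h1; rw [Equiv.swap_apply_left]; omega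
    · by_cases h2 : i = b
      · subst h2; rw [Equiv.swap_apply_right]; omega
      · rw [Equiv.swap_apply_of_ne_of_ne h1 h2]
  calc Lf (f ∘ (Equiv.swap a b)) t
      = ∑ i : Fin n, (if (((Equiv.swap a b) i : Fin n):ℕ) ≤ t then f ((Equiv.swap a b) i) else 0) := by
        unfold Lf
        exact sum_congr rfl fun i _ => by rw [if_congr ((key i).symm) rfl rfl]; rfl
    _ = Lf f t := Equiv.sum_comp (Equiv.swap a b) (fun j : Fin n => if (j:ℕ) ≤ t then f j else 0)

lemma Lf_swap_eq (f : Fin n → ℤ) {a b : Fin n} {u : ℕ} (ha : (a:ℕ) = u)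
    (hb : (b:ℕ) = u + 1) :
    Lf (f ∘ (Equiv.swap a b)) u = Lf f u - (f a - f b) := by
  have hab : a ≠ b := by intro h; rw [h] at ha; omega
  have key : Lf (f ∘ (Equiv.swap a b)) u - Lf f u = f b - f a := by
    unfold Lf
    rw [← Finset.sum_sub_distrib]
    rw [Finset.sum_eq_single a]
    · rw [Function.comp_apply, Equiv.swap_apply_left]
      simp only [if_pos (show (a:ℕ) ≤ u from by omega)]
    · intro i _ hia
      by_cases hib : i = b
      · subst hib
        simp only [if_neg (show ¬ (i:ℕ) ≤ u from by omega)]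
        ring
      · rw [Function.comp_apply, Equiv.swap_apply_of_ne_of_ne hia hib]; ring
    · intro h; exact absurd (Finset.mem_univ a) h
  linarith [key]

lemma swap_Z {β : Fin n → ℤ} (hβ : Monotone β) (f : Fin n → ℤ) {a b : Fin n} {u : ℕ}
    (ha : (a:ℕ) = u) (hb : (b:ℕ) = u + 1) (hu : u + 1 < n) :
    Zf β (f ∘ (Equiv.swap a b))
      = Zf β f + dβ β u * (2 * ((f a - f b) * (2 * Lf f u - (f a - f b) - Tf f))) := by
  have hu' : u ∈ range (n-1) := by rw [mem_range]; omega
  rw [cut hβ f, cut hβ (f ∘ (Equiv.swap a b)), Tf_comp]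
  rw [sum_update_single hu'
      (h := fun t => dβ β t * (2 * (Lf f t * (Tf f - Lf f t))))
      (h' := fun t => dβ β t * (2 * (Lf (f ∘ (Equiv.swap a b)) t * (Tf f - Lf (f ∘ (Equiv.swap a b)) t))))
      (fun t _ htu => by simp only [Lf_swap_ne f ha hb htu])]
  rw [Lf_swap_eq f ha hb]
  ring

lemma swap_Φ (f : Fin n → ℤ) {a b : Fin n} {u : ℕ}
    (ha : (a:ℕ) = u) (hb : (b:ℕ) = u + 1) (hu : u + 1 < n) :
    Φf (f ∘ (Equiv.swap a b))
      = Φf f + (f a - f b) * (2 * Lf f u - (f a - f b) - Tf f) := by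
  have hu' : u ∈ range (n-1) := by rw [mem_range]; omega
  unfold Φf
  rw [Tf_comp]
  rw [sum_update_single hu'
      (h := fun t => Lf f t * (Tf f - Lf f t))
      (h' := fun t => Lf (f ∘ (Equiv.swap a b)) t * (Tf f - Lf (f ∘ (Equiv.swap a b)) t))
      (fun t _ htu => by simp only [Lf_swap_ne f ha hb htu])]
  rw [Lf_swap_eq f ha hb]
  ring

lemma swap_Ψ (f : Fin n → ℤ) {a b : Fin n} {u : ℕ}
    (ha : (a:ℕ) = u) (hb : (b:ℕ) = u + 1) (hu : u + 1 < n) :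
    Ψf (f ∘ (Equiv.swap a b)) = Ψf f - (f a - f b) := by
  have hu' : u ∈ range (n-1) := by rw [mem_range]; omega
  unfold Ψf
  rw [sum_update_single hu'
      (h := fun t => Lf f t)
      (h' := fun t => Lf (f ∘ (Equiv.swap a b)) t)
      (fun t _ htu => by simp only [Lf_swap_ne f ha hb htu])]
  rw [Lf_swap_eq f ha hb]
  ring

lemma chain_desc {F : ℕ → ℤ} {m : ℕ} :
    ∀ j, m ≤ j → (∀ k, m ≤ k → k < j → F (k+1) ≤ F k) → F j ≤ F m := by
  intro j
  induction j with
  | zero =>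
    intro hj _
    have hm0 : m = 0 := by omega
    subst hm0
    exact le_refl _
  | succ j ih =>
    intro hj hstep
    rcases Nat.lt_or_ge j m with h | h
    · have hm : m = j + 1 := by omega
      subst hm; exact le_refl _
    · exact le_trans (hstep j h (by omega))
        (ih h (fun k hk1 hk2 => hstep k hk1 (by omega)))

lemma chain_desc' {F : ℕ → ℤ} {m : ℕ} (h : ∀ i, i + 1 ≤ m → F (i+1) ≤ F i) :
    ∀ p q, p ≤ q → q ≤ m → F q ≤ F p := by
  intro p q hpq hqm
  exact chain_desc q hpq (fun k hk1 hk2 => h k (by omega))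

lemma chain_asc' {F : ℕ → ℤ} {m N : ℕ} (h : ∀ i, m ≤ i → i + 1 < N → F i ≤ F (i+1)) :
    ∀ p q, m ≤ p → p ≤ q → q < N → F p ≤ F q := by
  intro p q hmp hpq hqN
  induction q with
  | zero =>
    have hp0 : p = 0 := by omega
    subst hp0
    exact le_refl _
  | succ q ih =>
    rcases Nat.lt_or_ge q p with h1 | h1
    · have hp : p = q + 1 := by omega
      subst hp; exact le_refl _
    · exact le_trans (ih h1 (by omega)) (h q (by omega) (by omega))

lemma plateau {N : ℕ} {F : ℕ → ℤ}
    (H : ¬ ∀ a b, a ≤ b → b + 1 < N → F a < F (a+1) → F b ≤ F (b+1)) :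
    ∃ a q, a + 1 ≤ q ∧ q + 1 < N ∧ F a < F (a+1) ∧
      (∀ i, a + 1 ≤ i → i ≤ q → F i = F (a+1)) ∧ F (q+1) < F q := by
  push_neg at H
  obtain ⟨a0, b0, hab0, hb0, hasc0, hdesc0⟩ := H
  have hex : ∃ d, ∃ a b, b - a = d ∧ a ≤ b ∧ b + 1 < N ∧ F a < F (a+1) ∧ F (b+1) < F b :=
    ⟨b0 - a0, a0, b0, rfl, hab0, hb0, hasc0, hdesc0⟩
  classical
  obtain ⟨a, b, hd, hab, hbN, hasc, hdesc⟩ := Nat.find_spec hex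
  have hmin := fun d' (hd' : d' < Nat.find hex) => Nat.find_min hex hd'
  have hanb : a < b := by
    rcases Nat.lt_or_ge a b with h | h
    · exact h
    · exfalso
      have : a = b := by omega
      subst this
      exact absurd hasc (by exact not_lt.2 (le_of_lt hdesc))
  have flat : ∀ j, a < j → j < b → F j = F (j + 1) := by
    intro j hj1 hj2
    rcases lt_trichotomy (F j) (F (j+1)) with h | h | h
    · exfalso
      refine hmin (b - j) (by omega) ⟨j, b, rfl, by omega, hbN, h, hdesc⟩
    · exact h
    · exfalso
      refine hmin (j - a) (by omega) ⟨a, j, rfl, by omega, by omega, hasc, h⟩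
  have flat' : ∀ i, a + 1 ≤ i → i ≤ b → F i = F (a+1) := by
    intro i hi1
    induction i with
    | zero => omega
    | succ i ih =>
      intro hib
      rcases Nat.lt_or_ge i (a+1) with h | h
      · have : i = a := by omega
        simp [this]
      · rw [← flat i (by omega) (by omega)]
        exact ih (by omega) (by omega)
  exact ⟨a, b, by omega, hbN, hasc, flat', hdesc⟩

lemma valley {N : ℕ} {F : ℕ → ℤ} (hN : 1 ≤ N)
    (W : ∀ a b, a ≤ b → b + 1 < N → F a < F (a+1) → F b ≤ F (b+1)) :
    ∃ m, m < N ∧ (∀ i, i + 1 ≤ m → F (i+1) ≤ F i) ∧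
      (∀ i, m ≤ i → i + 1 < N → F i ≤ F (i+1)) := by
  classical
  have hex : ∃ m, m < N ∧ ∀ s, s < N → F m ≤ F s := by
    obtain ⟨m, hm, hmin⟩ := Finset.exists_min_image (Finset.range N) F ⟨0, by simp; omega⟩
    exact ⟨m, by simpa using hm, fun s hs => hmin s (by simpa using hs)⟩
  set m := Nat.find hex with hmdef
  obtain ⟨hmN, hmin⟩ := Nat.find_spec hex
  refine ⟨m, hmN, ?_, ?_⟩
  · intro i hi
    by_contra hcon
    have hasc : F i < F (i+1) := by omega
    have hm1 : F m < F (m - 1) := by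
      rcases lt_or_ge (F m) (F (m-1)) with h | h
      · exact h
      · exfalso
        have : m - 1 < m := by omega
        exact Nat.find_min hex this ⟨by omega, fun s hs => le_trans h (hmin s hs)⟩
    have := W i (m-1) (by omega) (by omega) hasc
    rw [show m - 1 + 1 = m by omega] at this
    omega
  · intro i him hi1
    by_contra hcon
    have hdesc : F (i+1) < F i := by omega
    have hmi : F m < F i := lt_of_le_of_lt (hmin (i+1) hi1) hdesc
    have hascx : ∃ x, m ≤ x ∧ x < i ∧ F x < F (x+1) := by
      by_contra hno
      push_neg at hno
      have : F i ≤ F m := chain_desc i him (fun k hk1 hk2 => hno k hk1 hk2)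
      omega
    obtain ⟨x, hx1, hx2, hx3⟩ := hascx
    have := W x i (by omega) hi1 hx3
    omega

lemma construct {n : ℕ} (α : Fin n → ℕ) (hα : Monotone α) (π0 : Equiv.Perm (Fin n))
    (m : ℕ) (hm : m < n)
    (h1 : ∀ p q : Fin n, (p:ℕ) < (q:ℕ) → (q:ℕ) ≤ m → α (π0 q) ≤ α (π0 p))
    (h2 : ∀ p q : Fin n, m ≤ (p:ℕ) → (p:ℕ) < (q:ℕ) → α (π0 p) ≤ α (π0 q)) :
    ∃ π' : Equiv.Perm (Fin n), (∀ i, α (π' i) = α (π0 i)) ∧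
      (∀ p q : Fin n, (p:ℕ) < (q:ℕ) → (q:ℕ) ≤ m → π' q < π' p) ∧
      (∀ p q : Fin n, m ≤ (p:ℕ) → (p:ℕ) < (q:ℕ) → π' p < π' q) := by
  classical
  set fn : Fin n → ℕ := fun i => α (π0 i) with hfn
  set c : Fin n → ℕ := fun p => if (p:ℕ) ≤ m then 2*(m - (p:ℕ)) else 2*((p:ℕ) - m) - 1 with hc
  set κ : Fin n → ℕ := fun p => fn p * (2*n) + c p with hκ
  have hcb : ∀ p : Fin n, c p < 2*n := by
    intro p
    have := p.isLt
    by_cases h : (p:ℕ) ≤ m <;> simp [hc, h] <;> omega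
  have klt : ∀ p q : Fin n, (fn p < fn q ∨ (fn p = fn q ∧ c p < c q)) → κ p < κ q := by
    intro p q h
    rcases h with h | ⟨h1', h2'⟩
    · have : κ p < (fn p + 1) * (2*n) := by
        simp only [hκ]
        have := hcb p
        nlinarith
      calc κ p < (fn p + 1) * (2*n) := this
        _ ≤ fn q * (2*n) := Nat.mul_le_mul_right _ (by omega)
        _ ≤ κ q := Nat.le_add_right _ _
    · simp only [hκ, h1']
      omega
  have kle : ∀ p q : Fin n, κ p ≤ κ q → fn p ≤ fn q := by
    intro p q h
    by_contra hcon
    have := klt q p (Or.inl (by omega))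
    omega
  have hcinj : Function.Injective c := by
    intro p q h
    have hp := p.isLt
    have hq := q.isLt
    simp only [hc] at h
    by_cases h1' : (p:ℕ) ≤ m <;> by_cases h2' : (q:ℕ) ≤ m <;>
      simp [h1', h2'] at h <;> exact Fin.ext (by omega)
  have hκinj : Function.Injective κ := by
    intro p q h
    rcases lt_trichotomy (fn p) (fn q) with hf | hf | hf
    · exact absurd (klt p q (Or.inl hf)) (by omega)
    · apply hcinj
      simp only [hκ, hf] at h
      omega
    · exact absurd (klt q p (Or.inl hf)) (by omega)
  have kdec : ∀ p q : Fin n, (p:ℕ) < (q:ℕ) → (q:ℕ) ≤ m → κ q < κ p := by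
    intro p q hpq hqm
    rcases lt_or_eq_of_le (h1 p q hpq hqm) with h | h
    · exact klt q p (Or.inl h)
    · refine klt q p (Or.inr ⟨show fn q = fn p from h, ?_⟩)
      simp only [hc, if_pos hqm, if_pos (show (p:ℕ) ≤ m by omega)]
      omega
  have kinc : ∀ p q : Fin n, m ≤ (p:ℕ) → (p:ℕ) < (q:ℕ) → κ p < κ q := by
    intro p q hmp hpq
    rcases lt_or_eq_of_le (h2 p q hmp hpq) with h | h
    · exact klt p q (Or.inl h)
    · refine klt p q (Or.inr ⟨show fn p = fn q from h, ?_⟩)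
      by_cases hpm : (p:ℕ) ≤ m
      · simp only [hc, if_pos hpm, if_neg (show ¬ (q:ℕ) ≤ m by omega)]
        omega
      · simp only [hc, if_neg hpm, if_neg (show ¬ (q:ℕ) ≤ m by omega)]
        omega
  set τ := Tuple.sort κ with hτ
  have hmono : Monotone (κ ∘ τ) := Tuple.monotone_sort κ
  have hsm : StrictMono (κ ∘ τ) :=
    hmono.strictMono_of_injective (hκinj.comp τ.injective)
  refine ⟨τ⁻¹, ?_, ?_, ?_⟩
  · -- values
    have hfnτ : Monotone (fn ∘ τ) := fun p q hpq => kle _ _ (hmono hpq)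
    have hmulmono : Monotone (α ∘ ⇑(π0 * τ)) := by
      intro p q hpq
      simpa [Equiv.Perm.mul_apply] using hfnτ hpq
    have hone : Monotone (α ∘ ⇑(1 : Equiv.Perm (Fin n))) := by
      simpa using hα
    have huniq := Tuple.unique_monotone hmulmono hone
    intro i
    have := congrFun huniq (τ⁻¹ i)
    simp only [Function.comp_apply, Equiv.Perm.mul_apply, Equiv.Perm.one_apply,
      Equiv.Perm.inv_def, Equiv.apply_symm_apply] at this
    exact this.symm
  · intro p q hpq hqm
    have : κ (τ (τ⁻¹ q)) < κ (τ (τ⁻¹ p)) := by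
      simp only [Equiv.Perm.inv_def, Equiv.apply_symm_apply]
      exact kdec p q hpq hqm
    exact hsm.lt_iff_lt.mp this
  · intro p q hmp hpq
    have : κ (τ (τ⁻¹ p)) < κ (τ (τ⁻¹ q)) := by
      simp only [Equiv.Perm.inv_def, Equiv.apply_symm_apply]
      exact kinc p q hmp hpq
    exact hsm.lt_iff_lt.mp this

def gof {n : ℕ} (α : Fin n → ℕ) (σ : Equiv.Perm (Fin n)) : Fin n → ℤ :=
  fun i => (α (σ i) : ℤ)

def Fof {n : ℕ} (α : Fin n → ℕ) (π0 : Equiv.Perm (Fin n)) (t : ℕ) : ℤ :=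
  if h : t < n then gof α π0 ⟨t, h⟩ else 0

lemma gof_mul {n : ℕ} (α : Fin n → ℕ) (π0 e : Equiv.Perm (Fin n)) :
    gof α (π0 * e) = gof α π0 ∘ ⇑e := by
  funext i; simp [gof, Equiv.Perm.mul_apply]

lemma gof_nonneg {n : ℕ} (α : Fin n → ℕ) (σ : Equiv.Perm (Fin n)) (i : Fin n) :
    0 ≤ gof α σ i := Int.natCast_nonneg _

lemma Fof_eq {n : ℕ} (α : Fin n → ℕ) (π0 : Equiv.Perm (Fin n)) {t : ℕ} (h : t < n) :
    Fof α π0 t = gof α π0 ⟨t, h⟩ := by simp [Fof, h]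

lemma Fof_nonneg {n : ℕ} (α : Fin n → ℕ) (π0 : Equiv.Perm (Fin n)) (t : ℕ) :
    0 ≤ Fof α π0 t := by
  unfold Fof; split
  · exact gof_nonneg α π0 _
  · exact le_refl 0

end Stmt4Aux

open Stmt4Aux Finset in
theorem stmt4' (n : ℕ) (hn : 1 ≤ n)
    (α : Fin n → ℕ) (hα : Monotone α)
    (β : Fin n → ℤ) (hβ : Monotone β) :
    ∃ π : Equiv.Perm (Fin n),
      (∀ σ : Equiv.Perm (Fin n),
        Zf β (gof α σ) ≤ Zf β (gof α π)) ∧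
      ∃ ℓ : ℕ, 1 ≤ ℓ ∧ ℓ ≤ n ∧
        (∀ i : ℕ, ∀ hi : i + 1 < n, i + 2 ≤ ℓ →
          π ⟨i + 1, hi⟩ < π ⟨i, Nat.lt_of_succ_lt hi⟩) ∧
        (∀ i : ℕ, ∀ hi : i + 1 < n, ℓ ≤ i + 1 →
          π ⟨i, Nat.lt_of_succ_lt hi⟩ < π ⟨i + 1, hi⟩) := by
  classical
  -- lexicographic selection of an optimum
  obtain ⟨π1, -, hπ1⟩ := Finset.exists_max_image Finset.univ (fun σ => Zf β (gof α σ))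
    ⟨1, Finset.mem_univ 1⟩
  set A : Finset (Equiv.Perm (Fin n)) :=
    Finset.univ.filter (fun σ => Zf β (gof α σ) = Zf β (gof α π1)) with hA
  have hπ1A : π1 ∈ A := by simp [hA]
  obtain ⟨π2, hπ2A, hπ2⟩ := Finset.exists_max_image A (fun σ => Φf (gof α σ)) ⟨π1, hπ1A⟩
  set B : Finset (Equiv.Perm (Fin n)) :=
    A.filter (fun σ => Φf (gof α σ) = Φf (gof α π2)) with hB
  have hπ2B : π2 ∈ B := by simp [hB, hπ2A]
  obtain ⟨π0, hπ0B, hπ0⟩ := Finset.exists_min_image B (fun σ => Ψf (gof α σ)) ⟨π2, hπ2B⟩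
  have hπ0A : π0 ∈ A := (Finset.mem_filter.mp hπ0B).1
  have hZπ0 : Zf β (gof α π0) = Zf β (gof α π1) := by
    have := (Finset.mem_filter.mp hπ0A).2
    simpa using this
  have hΦπ0 : Φf (gof α π0) = Φf (gof α π2) := by
    have := (Finset.mem_filter.mp hπ0B).2
    simpa using this
  have hZmax : ∀ σ, Zf β (gof α σ) ≤ Zf β (gof α π0) := fun σ => by
    rw [hZπ0]; exact hπ1 σ (Finset.mem_univ σ)
  have hΦmax : ∀ σ, Zf β (gof α σ) = Zf β (gof α π0) → Φf (gof α σ) ≤ Φf (gof α π0) := by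
    intro σ hσ
    rw [hΦπ0]
    exact hπ2 σ (by simp [hA, hσ.trans hZπ0])
  have hΨmin : ∀ σ, Zf β (gof α σ) = Zf β (gof α π0) → Φf (gof α σ) = Φf (gof α π0) →
      Ψf (gof α π0) ≤ Ψf (gof α σ) := by
    intro σ h1' h2'
    refine hπ0 σ ?_
    simp only [hB, Finset.mem_filter]
    refine ⟨by simp [hA, h1'.trans hZπ0], h2'.trans hΦπ0⟩
  -- weak V-shapedness of the value sequence of π0
  have hW : ∀ a b, a ≤ b → b + 1 < n → Fof α π0 a < Fof α π0 (a+1) →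
      Fof α π0 b ≤ Fof α π0 (b+1) := by
    by_contra H
    obtain ⟨a, q, haq, hqn, hasc, hflat, hdesc⟩ := plateau H
    have han : a + 1 < n := by omega
    have hqn' : q < n := by omega
    have hFq : Fof α π0 q = Fof α π0 (a+1) := hflat q haq le_rfl
    -- the prefix-sum gap dominates the plateau value
    have hLdiff : Fof α π0 (a+1) ≤ Lf (gof α π0) q - Lf (gof α π0) a := by
      have hterm : ∀ i : Fin n,
          0 ≤ (if (i:ℕ) ≤ q then gof α π0 i else 0) - (if (i:ℕ) ≤ a then gof α π0 i else 0) := by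
        intro i
        by_cases h1 : (i:ℕ) ≤ a
        · rw [if_pos (show (i:ℕ) ≤ q by omega), if_pos h1]
          simp
        · by_cases h2 : (i:ℕ) ≤ q
          · rw [if_pos h2, if_neg h1]
            have := gof_nonneg α π0 i
            linarith
          · rw [if_neg h2, if_neg h1]
            simp
      have hq_at : (if (((⟨q, hqn'⟩ : Fin n)):ℕ) ≤ q then gof α π0 ⟨q, hqn'⟩ else 0)
          - (if (((⟨q, hqn'⟩ : Fin n)):ℕ) ≤ a then gof α π0 ⟨q, hqn'⟩ else 0)
          = Fof α π0 q := by
        rw [if_pos (show ((⟨q, hqn'⟩ : Fin n) : ℕ) ≤ q from le_refl q),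
          if_neg (show ¬ ((⟨q, hqn'⟩ : Fin n) : ℕ) ≤ a from by simp; omega),
          Fof_eq α π0 hqn']
        ring
      have hsingle := Finset.single_le_sum (fun i _ => hterm i)
        (Finset.mem_univ (⟨q, hqn'⟩ : Fin n))
      rw [hq_at] at hsingle
      have hsplit : ∑ i : Fin n,
          ((if (i:ℕ) ≤ q then gof α π0 i else 0) - (if (i:ℕ) ≤ a then gof α π0 i else 0))
          = Lf (gof α π0) q - Lf (gof α π0) a := Finset.sum_sub_distrib _ _
      rw [hsplit] at hsingle
      linarith [hFq]
    have hccle : Fof α π0 q - Fof α π0 (q+1) ≤ Fof α π0 (a+1) := by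
      have := Fof_nonneg α π0 (q+1)
      linarith [hFq]
    have hc'le : Fof α π0 (a+1) - Fof α π0 a ≤ Fof α π0 (a+1) := by
      have := Fof_nonneg α π0 a
      linarith
    have hccpos : 0 < Fof α π0 q - Fof α π0 (q+1) := by linarith [hdesc]
    have hc'pos : 0 < Fof α π0 (a+1) - Fof α π0 a := by linarith [hasc]
    by_cases hcase : Tf (gof α π0) ≤ 2 * Lf (gof α π0) q - (Fof α π0 q - Fof α π0 (q+1))
    · -- swap q and q+1 : Z and Φ stay, Ψ strictly drops
      set e := Equiv.swap (⟨q, hqn'⟩ : Fin n) (⟨q+1, hqn⟩ : Fin n) with he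
      set σ' := π0 * e with hσ'
      have hgσ' : gof α σ' = gof α π0 ∘ ⇑e := gof_mul α π0 e
      have hdiff : gof α π0 ⟨q, hqn'⟩ - gof α π0 ⟨q+1, hqn⟩
          = Fof α π0 q - Fof α π0 (q+1) := by
        rw [Fof_eq α π0 hqn', Fof_eq α π0 hqn]
      have hZ' : Zf β (gof α σ') = Zf β (gof α π0)
          + dβ β q * (2 * ((Fof α π0 q - Fof α π0 (q+1)) *
            (2 * Lf (gof α π0) q - (Fof α π0 q - Fof α π0 (q+1)) - Tf (gof α π0)))) := by
        rw [hgσ', he, swap_Z hβ (gof α π0) rfl rfl hqn, hdiff]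
      have hΦ' : Φf (gof α σ') = Φf (gof α π0)
          + (Fof α π0 q - Fof α π0 (q+1)) *
            (2 * Lf (gof α π0) q - (Fof α π0 q - Fof α π0 (q+1)) - Tf (gof α π0)) := by
        rw [hgσ', he, swap_Φ (gof α π0) rfl rfl hqn, hdiff]
      have hΨ' : Ψf (gof α σ') = Ψf (gof α π0) - (Fof α π0 q - Fof α π0 (q+1)) := by
        rw [hgσ', he, swap_Ψ (gof α π0) rfl rfl hqn, hdiff]
      have hdnn := dβ_nonneg hβ q
      have hprodnn : 0 ≤ (Fof α π0 q - Fof α π0 (q+1)) *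
          (2 * Lf (gof α π0) q - (Fof α π0 q - Fof α π0 (q+1)) - Tf (gof α π0)) :=
        mul_nonneg (le_of_lt hccpos) (by linarith)
      have hZeq : Zf β (gof α σ') = Zf β (gof α π0) := by
        refine le_antisymm (hZmax σ') ?_
        rw [hZ']
        have : 0 ≤ dβ β q * (2 * ((Fof α π0 q - Fof α π0 (q+1)) *
            (2 * Lf (gof α π0) q - (Fof α π0 q - Fof α π0 (q+1)) - Tf (gof α π0)))) :=
          mul_nonneg hdnn (by linarith)
        linarith
      have hΦeq : Φf (gof α σ') = Φf (gof α π0) := by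
        refine le_antisymm (hΦmax σ' hZeq) ?_
        rw [hΦ']
        linarith
      have := hΨmin σ' hZeq hΦeq
      rw [hΨ'] at this
      linarith
    · -- swap a and a+1 : Z stays, Φ strictly increases
      have hTgt : 2 * Lf (gof α π0) q - (Fof α π0 q - Fof α π0 (q+1)) < Tf (gof α π0) :=
        not_le.mp hcase
      have hlt : 2 * Lf (gof α π0) a + (Fof α π0 (a+1) - Fof α π0 a) < Tf (gof α π0) := by
        linarith
      set e := Equiv.swap (⟨a, by omega⟩ : Fin n) (⟨a+1, han⟩ : Fin n) with he
      set σ' := π0 * e with hσ'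
      have hgσ' : gof α σ' = gof α π0 ∘ ⇑e := gof_mul α π0 e
      have hdiff : gof α π0 ⟨a, by omega⟩ - gof α π0 ⟨a+1, han⟩
          = -(Fof α π0 (a+1) - Fof α π0 a) := by
        rw [Fof_eq α π0 (show a < n by omega), Fof_eq α π0 han]
        ring
      have hZ' : Zf β (gof α σ') = Zf β (gof α π0)
          + dβ β a * (2 * ((-(Fof α π0 (a+1) - Fof α π0 a)) *
            (2 * Lf (gof α π0) a - (-(Fof α π0 (a+1) - Fof α π0 a)) - Tf (gof α π0)))) := by
        rw [hgσ', he, swap_Z hβ (gof α π0) rfl rfl han, hdiff]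
      have hΦ' : Φf (gof α σ') = Φf (gof α π0)
          + (-(Fof α π0 (a+1) - Fof α π0 a)) *
            (2 * Lf (gof α π0) a - (-(Fof α π0 (a+1) - Fof α π0 a)) - Tf (gof α π0)) := by
        rw [hgσ', he, swap_Φ (gof α π0) rfl rfl han, hdiff]
      have hdnn := dβ_nonneg hβ a
      have hprodpos : 0 < (-(Fof α π0 (a+1) - Fof α π0 a)) *
          (2 * Lf (gof α π0) a - (-(Fof α π0 (a+1) - Fof α π0 a)) - Tf (gof α π0)) := by
        have h1' : (-(Fof α π0 (a+1) - Fof α π0 a)) < 0 := by linarith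
        have h2' : (2 * Lf (gof α π0) a - (-(Fof α π0 (a+1) - Fof α π0 a)) - Tf (gof α π0)) < 0 := by
          linarith
        exact mul_pos_of_neg_of_neg h1' h2'
      have hZeq : Zf β (gof α σ') = Zf β (gof α π0) := by
        refine le_antisymm (hZmax σ') ?_
        rw [hZ']
        have : 0 ≤ dβ β a * (2 * ((-(Fof α π0 (a+1) - Fof α π0 a)) *
            (2 * Lf (gof α π0) a - (-(Fof α π0 (a+1) - Fof α π0 a)) - Tf (gof α π0)))) :=
          mul_nonneg hdnn (by linarith)
        linarith
      have := hΦmax σ' hZeq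
      rw [hΦ'] at this
      linarith
  -- extract the valley
  obtain ⟨m, hmn, hdec, hinc⟩ := valley (show 1 ≤ n from hn) hW
  have h1 : ∀ p q : Fin n, (p:ℕ) < (q:ℕ) → (q:ℕ) ≤ m → α (π0 q) ≤ α (π0 p) := by
    intro p q hpq hqm
    have hc := chain_desc' hdec (p:ℕ) (q:ℕ) (le_of_lt hpq) hqm
    rw [Fof_eq α π0 p.isLt, Fof_eq α π0 q.isLt] at hc
    simp only [gof, Fin.eta] at hc
    exact_mod_cast hc
  have h2 : ∀ p q : Fin n, m ≤ (p:ℕ) → (p:ℕ) < (q:ℕ) → α (π0 p) ≤ α (π0 q) := by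
    intro p q hmp hpq
    have hc := chain_asc' hinc (p:ℕ) (q:ℕ) hmp (le_of_lt hpq) q.isLt
    rw [Fof_eq α π0 p.isLt, Fof_eq α π0 q.isLt] at hc
    simp only [gof, Fin.eta] at hc
    exact_mod_cast hc
  obtain ⟨π', hval, hdec', hinc'⟩ := construct α hα π0 m hmn h1 h2
  have hval' : gof α π' = gof α π0 := by
    funext i
    simp only [gof]
    exact_mod_cast hval i
  refine ⟨π', ?_, m+1, by omega, by omega, ?_, ?_⟩
  · intro σ
    rw [hval']
    exact hZmax σ
  · intro i hi hil
    exact hdec' ⟨i, by omega⟩ ⟨i+1, hi⟩ (show i < i+1 by omega) (show i+1 ≤ m by omega)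
  · intro i hi hil
    exact hinc' ⟨i, by omega⟩ ⟨i+1, hi⟩ (show m ≤ i by omega) (show i < i+1 by omega)

/-- Every instance of the Wiener Max-QAP (product matrix from
nondecreasing nonnegative integers α, 1D-distance matrix from nondecreasing
integers β) has an optimal permutation that is V-shaped: π is strictly
decreasing up to some position ℓ and strictly increasing from ℓ on.
(Positions are 0-based; the 1-indexed position p corresponds to index p−1.) -/
theorem stmt4 (n : ℕ) (hn : 1 ≤ n)
    (α : Fin n → ℕ) (hα : Monotone α)
    (β : Fin n → ℤ) (hβ : Monotone β) :
    ∃ π : Equiv.Perm (Fin n),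
      (∀ σ : Equiv.Perm (Fin n),
        (∑ i, ∑ j, (α (σ i) : ℤ) * (α (σ j) : ℤ) * |β i - β j|) ≤
          ∑ i, ∑ j, (α (π i) : ℤ) * (α (π j) : ℤ) * |β i - β j|) ∧
      ∃ ℓ : ℕ, 1 ≤ ℓ ∧ ℓ ≤ n ∧
        (∀ i : ℕ, ∀ hi : i + 1 < n, i + 2 ≤ ℓ →
          π ⟨i + 1, hi⟩ < π ⟨i, by omega⟩) ∧
        (∀ i : ℕ, ∀ hi : i + 1 < n, ℓ ≤ i + 1 →
          π ⟨i, by omega⟩ < π ⟨i + 1, hi⟩) := by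
  obtain ⟨π, hopt, hV⟩ := stmt4' n hn α hα β hβ
  exact ⟨π, fun σ => hopt σ, hV⟩
end

section
/- If real numbers L, R, a, b, c with a < c, b < c, and a, b ≥ 0 satisfy both c + R − L ≤ 0 being implied by (c−a)(β_k−β_{k−1})(b+R−L) ≤ 0 with β_{k−1} < β_k, and (c−b)(β_{k+1}−β_k)(a−R+L) ≤ 0 with β_k < β_{k+1}, then a + b ≤ 0; hence if additionally a > 0 or b > 0, no such configuration exists. -/
/-- The exchange-argument arithmetic ruling out a strict local
maximum: if a,b are nonnegative, a < c, b < c, β_{k-1} < β_k < β_{k+1},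
L,R ≥ 0, and both exchange inequalities
(c−a)(β_k−β_{k−1})(b+R−L) ≤ 0 and (c−b)(β_{k+1}−β_k)(a−R+L) ≤ 0 hold,
then a + b ≤ 0; hence (since a,b ≥ 0) no such configuration with a > 0 or
b > 0 exists. -/
theorem stmt5 (L R a b c β₁ β₂ β₃ : ℝ)
    (hL : 0 ≤ L) (hR : 0 ≤ R) (ha : 0 ≤ a) (hb : 0 ≤ b)
    (hac : a < c) (hbc : b < c) (h12 : β₁ < β₂) (h23 : β₂ < β₃)
    (h1 : (c - a) * (β₂ - β₁) * (b + R - L) ≤ 0)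
    (h2 : (c - b) * (β₃ - β₂) * (a - R + L) ≤ 0) :
    a + b ≤ 0 ∧ ¬ (0 < a ∨ 0 < b) := by
  have k1 : b + R - L ≤ 0 := by
    nlinarith [mul_pos (sub_pos.mpr hac) (sub_pos.mpr h12)]
  have k2 : a - R + L ≤ 0 := by
    nlinarith [mul_pos (sub_pos.mpr hbc) (sub_pos.mpr h23)]
  have hab : a + b ≤ 0 := by linarith
  exact ⟨hab, by rintro (h|h) <;> linarith⟩
end

section
/- Let T be a caterpillar with backbone vertices v_1,…,v_n in path order (n ≥ 1), where v_i is adjacent to exactly ℓ_i leaves. Then the Wiener index of T equals (Σ_{i=1}^n ℓ_i)² + (n−1)·Σ_{i=1}^n ℓ_i + (1/2)·Σ_{i=1}^n Σ_{j=1}^n (ℓ_i+1)(ℓ_j+1)|i−j|. -/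
/-- The caterpillar tree with backbone vertices `v_1, …, v_n` (in path order),
where the backbone vertex `v_i` is additionally adjacent to `ℓ i` leaves. -/
def caterpillar (n : ℕ) (ℓ : Fin n → ℕ) :
    SimpleGraph ((Fin n) ⊕ (Σ i : Fin n, Fin (ℓ i))) :=
  SimpleGraph.fromRel (fun x y =>
    match x, y with
    | Sum.inl i, Sum.inl j => (i : ℕ) + 1 = (j : ℕ)
    | Sum.inl i, Sum.inr ⟨j, _⟩ => i = j
    | _, _ => False)

/-- The Wiener index: the sum of the distances over all unordered pairs of
vertices (each ordered pair is counted once in the double sum, hence the ½). -/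
noncomputable def wienerIndex {V : Type*} [Fintype V] (G : SimpleGraph V) : ℚ :=
  (∑ u, ∑ v, (G.dist u v : ℚ)) / 2

section Aux
open SimpleGraph Finset
variable {n : ℕ} {ℓ : Fin n → ℕ}


def nd (i j : Fin n) : ℕ := ((i : ℕ) - (j : ℕ)) + ((j : ℕ) - (i : ℕ))

def cd : ((Fin n) ⊕ (Σ i : Fin n, Fin (ℓ i))) → ((Fin n) ⊕ (Σ i : Fin n, Fin (ℓ i))) → ℕ
  | Sum.inl i, Sum.inl j => nd i j
  | Sum.inl i, Sum.inr y => nd i y.1 + 1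
  | Sum.inr x, Sum.inl j => nd x.1 j + 1
  | Sum.inr x, Sum.inr y => if x = y then 0 else if x.1 = y.1 then 2 else nd x.1 y.1 + 2

lemma cd_self (u : (Fin n) ⊕ (Σ i : Fin n, Fin (ℓ i))) : cd u u = 0 := by
  rcases u with i | x <;> simp [cd, nd]

lemma cd_tri {u w : (Fin n) ⊕ (Σ i : Fin n, Fin (ℓ i))}
    (v : (Fin n) ⊕ (Σ i : Fin n, Fin (ℓ i)))
    (h : (caterpillar n ℓ).Adj u w) : cd u v ≤ cd w v + 1 := by
  rw [caterpillar, SimpleGraph.fromRel_adj] at h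
  obtain ⟨hne, h | h⟩ := h <;>
    rcases u with i | ⟨i, a⟩ <;> rcases w with j | ⟨j, b⟩ <;> simp at h <;>
    rcases v with k | ⟨k, c⟩ <;>
    simp only [cd]
  · unfold nd; omega
  · unfold nd; omega
  · have hh := congrArg Fin.val h; unfold nd; omega
  · have hh := congrArg Fin.val h
    split_ifs with h1 h2
    · have hk : (j : ℕ) = (k : ℕ) := congrArg (fun x : Σ i : Fin n, Fin (ℓ i) => (x.1 : ℕ)) h1
      unfold nd; omega
    · have hk := congrArg Fin.val h2; unfold nd; omega
    · unfold nd; omega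
  · unfold nd; omega
  · unfold nd; omega
  · have hh := congrArg Fin.val h; unfold nd; omega
  · have hh := congrArg Fin.val h
    split_ifs with h1 h2
    · omega
    · have hk := congrArg Fin.val h2; unfold nd; omega
    · have hk : (i : ℕ) = (k : ℕ) → False := fun hv => h2 (Fin.ext hv)
      unfold nd; omega

lemma cd_le_length {u v : (Fin n) ⊕ (Σ i : Fin n, Fin (ℓ i))}
    (p : (caterpillar n ℓ).Walk u v) : cd u v ≤ p.length := by
  induction p with
  | nil => simp [cd_self]
  | cons h p ih =>
    rw [Walk.length_cons]
    calc cd _ _ ≤ cd _ _ + 1 := cd_tri _ h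
    _ ≤ p.length + 1 := by omega

lemma adj_succ (i j : Fin n) (h : (i:ℕ)+1 = j) :
    (caterpillar n ℓ).Adj (Sum.inl i) (Sum.inl j) := by
  rw [caterpillar, SimpleGraph.fromRel_adj]
  exact ⟨by intro hc; injection hc with hc; omega, Or.inl h⟩

lemma adj_leaf (i : Fin n) (b : Fin (ℓ i)) :
    (caterpillar n ℓ).Adj (Sum.inl i) (Sum.inr ⟨i, b⟩) := by
  rw [caterpillar, SimpleGraph.fromRel_adj]
  exact ⟨by simp, Or.inl rfl⟩

lemma backbone_walk_aux (k : ℕ) : ∀ (i j : Fin n), (i:ℕ) ≤ j → (j:ℕ) - i ≤ k →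
    ∃ p : (caterpillar n ℓ).Walk (Sum.inl i) (Sum.inl j), p.length = (j:ℕ) - i := by
  induction k with
  | zero =>
    intro i j h1 h2
    have : i = j := Fin.ext (by omega)
    subst this
    exact ⟨Walk.nil, by simp⟩
  | succ k ih =>
    intro i j h1 h2
    by_cases he : (i:ℕ) = j
    · have : i = j := Fin.ext he
      subst this
      exact ⟨Walk.nil, by simp⟩
    · have hlt : (i:ℕ) < j := by omega
      have hin : (i:ℕ) + 1 < n := lt_of_le_of_lt hlt j.isLt
      obtain ⟨p, hp⟩ := ih ⟨(i:ℕ)+1, hin⟩ j (by simp; omega) (by simp; omega)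
      exact ⟨Walk.cons (adj_succ i ⟨(i:ℕ)+1, hin⟩ rfl) p, by simp [hp]; omega⟩

lemma backbone_walk (i j : Fin n) :
    ∃ p : (caterpillar n ℓ).Walk (Sum.inl i) (Sum.inl j), p.length = nd i j := by
  rcases le_total (i:ℕ) (j:ℕ) with h | h
  · obtain ⟨p, hp⟩ := backbone_walk_aux ((j:ℕ) - i) i j h le_rfl
    exact ⟨p, by rw [hp]; unfold nd; omega⟩
  · obtain ⟨p, hp⟩ := backbone_walk_aux ((i:ℕ) - j) j i h le_rfl
    exact ⟨p.reverse, by simp [hp]; unfold nd; omega⟩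

lemma exists_walk_cd (u v : (Fin n) ⊕ (Σ i : Fin n, Fin (ℓ i))) :
    ∃ p : (caterpillar n ℓ).Walk u v, p.length = cd u v := by
  rcases u with i | ⟨i, a⟩ <;> rcases v with j | ⟨j, b⟩
  · exact backbone_walk i j
  · obtain ⟨p, hp⟩ := backbone_walk (ℓ := ℓ) i j
    exact ⟨p.concat (adj_leaf j b), by simp [Walk.length_concat, hp, cd]⟩
  · obtain ⟨p, hp⟩ := backbone_walk (ℓ := ℓ) i j
    exact ⟨Walk.cons (adj_leaf i a).symm p, by simp [hp, cd]⟩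
  · by_cases he : (⟨i, a⟩ : Σ i : Fin n, Fin (ℓ i)) = ⟨j, b⟩
    · obtain ⟨rfl, h2⟩ := Sigma.mk.inj_iff.mp he
      obtain rfl := eq_of_heq h2
      exact ⟨Walk.nil, by simp [cd]⟩
    · obtain ⟨p, hp⟩ := backbone_walk (ℓ := ℓ) i j
      refine ⟨Walk.cons (adj_leaf i a).symm (p.concat (adj_leaf j b)), ?_⟩
      simp only [Walk.length_cons, Walk.length_concat, hp, cd, if_neg he]
      split_ifs with h2
      · have hk := congrArg Fin.val h2; unfold nd; omega
      · ring

lemma dist_eq_cd (u v : (Fin n) ⊕ (Σ i : Fin n, Fin (ℓ i))) :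
    (caterpillar n ℓ).dist u v = cd u v := by
  obtain ⟨p, hp⟩ := exists_walk_cd u v
  have h1 : (caterpillar n ℓ).dist u v ≤ cd u v := hp ▸ SimpleGraph.dist_le p
  obtain ⟨q, hq⟩ := Reachable.exists_walk_length_eq_dist ⟨p⟩
  have h2 : cd u v ≤ (caterpillar n ℓ).dist u v := hq ▸ cd_le_length q
  omega

lemma nd_cast (i j : Fin n) : ((nd i j : ℚ)) = |((i:ℕ):ℚ) - ((j:ℕ):ℚ)| := by
  rcases le_total (i:ℕ) (j:ℕ) with h | h
  · have h1 : nd i j = (j:ℕ) - (i:ℕ) := by unfold nd; omega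
    rw [h1, Nat.cast_sub h, abs_of_nonpos (by simp [h])]
    ring
  · have h1 : nd i j = (i:ℕ) - (j:ℕ) := by unfold nd; omega
    rw [h1, Nat.cast_sub h, abs_of_nonneg (by simp [h])]


lemma sigma_sum (g : Fin n → ℚ) : ∑ y : Σ i : Fin n, Fin (ℓ i), g y.1 = ∑ j, (ℓ j : ℚ) * g j := by
  rw [← Finset.univ_sigma_univ, Finset.sum_sigma]
  simp [mul_comm]

lemma cd_inr_cast (x y : Σ i : Fin n, Fin (ℓ i)) :
    (cd (Sum.inr x) (Sum.inr y) : ℚ) = ((nd x.1 y.1 : ℚ) + 2) - (if x = y then 2 else 0) := by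
  simp only [cd]
  split_ifs with h1 h2
  · subst h1; simp [nd]
  · have hk := congrArg Fin.val h2
    have : nd x.1 y.1 = 0 := by unfold nd; omega
    rw [this]; push_cast; ring
  · push_cast; ring


lemma key_sum :
    ∑ u : (Fin n) ⊕ (Σ i : Fin n, Fin (ℓ i)), ∑ v, (cd u v : ℚ) =
      (∑ i, ∑ j, ((ℓ i : ℚ) + 1) * ((ℓ j : ℚ) + 1) * (nd i j : ℚ))
      + 2 * n * (∑ i, (ℓ i : ℚ)) + 2 * (∑ i, (ℓ i : ℚ))^2 - 2 * (∑ i, (ℓ i : ℚ)) := by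
  have combine : ∀ (f g : Fin n → Fin n → ℚ),
      (∑ i, ∑ j, f i j) + (∑ i, ∑ j, g i j) = ∑ i, ∑ j, (f i j + g i j) := by
    intro f g
    rw [← Finset.sum_add_distrib]
    exact Finset.sum_congr rfl fun i _ => by rw [← Finset.sum_add_distrib]
  have hA : ∀ i j : Fin n, (cd (ℓ := ℓ) (Sum.inl i) (Sum.inl j) : ℚ) = nd i j :=
    fun i j => by simp [cd]
  have hB : ∀ (i : Fin n) (y : Σ i : Fin n, Fin (ℓ i)),
      (cd (Sum.inl i) (Sum.inr y) : ℚ) = (nd i y.1 : ℚ) + 1 := fun i y => by simp [cd]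
  have hC : ∀ (x : Σ i : Fin n, Fin (ℓ i)) (j : Fin n),
      (cd (Sum.inr x) (Sum.inl j) : ℚ) = (nd x.1 j : ℚ) + 1 := fun x j => by simp [cd]
  simp only [Fintype.sum_sum_type, hA, hB, hC, cd_inr_cast]
  rw [Finset.sum_add_distrib, Finset.sum_add_distrib]
  -- reduce sigma sums
  have e1 : ∀ i : Fin n, ∑ y : Σ i' : Fin n, Fin (ℓ i'), ((nd i y.1 : ℚ) + 1)
      = ∑ j, (ℓ j : ℚ) * ((nd i j : ℚ) + 1) :=
    fun i => sigma_sum (fun j => (nd i j : ℚ) + 1)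
  have e2 : ∑ x : Σ i : Fin n, Fin (ℓ i), ∑ j, ((nd x.1 j : ℚ) + 1)
      = ∑ i, (ℓ i : ℚ) * ∑ j, ((nd i j : ℚ) + 1) :=
    sigma_sum (fun i => ∑ j, ((nd i j : ℚ) + 1))
  have e3a : ∀ x : Σ i : Fin n, Fin (ℓ i),
      ∑ y : Σ i : Fin n, Fin (ℓ i), ((nd x.1 y.1 : ℚ) + 2 - if x = y then 2 else 0)
      = ((∑ y : Σ i : Fin n, Fin (ℓ i), ((nd x.1 y.1 : ℚ) + 2)) - 2) := by
    intro x
    rw [Finset.sum_sub_distrib]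
    simp
  have e3b : ∑ x : Σ i : Fin n, Fin (ℓ i),
        ((∑ y : Σ i : Fin n, Fin (ℓ i), ((nd x.1 y.1 : ℚ) + 2)) - 2)
      = (∑ i, ∑ j, (ℓ i : ℚ) * ((ℓ j : ℚ) * ((nd i j : ℚ) + 2))) - 2 * (∑ i, (ℓ i : ℚ)) := by
    rw [Finset.sum_sub_distrib]
    congr 1
    · rw [sigma_sum (fun i => ∑ y : Σ i : Fin n, Fin (ℓ i), ((nd i y.1 : ℚ) + 2))]
      refine Finset.sum_congr rfl fun i _ => ?_
      rw [sigma_sum (fun j => (nd i j : ℚ) + 2), Finset.mul_sum]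
    · rw [sigma_sum (fun _ => (2:ℚ)), Finset.mul_sum]
      exact Finset.sum_congr rfl fun i _ => mul_comm _ _
  simp only [e1, e3a]
  rw [e2, e3b]
  -- linear algebra over the remaining double sums
  have hmul : ∀ i : Fin n, (ℓ i : ℚ) * ∑ j, ((nd i j : ℚ) + 1)
      = ∑ j, (ℓ i : ℚ) * ((nd i j : ℚ) + 1) := fun i => Finset.mul_sum _ _ _
  simp only [hmul]
  have hL1 : ∑ i : Fin n, ∑ j : Fin n, (ℓ i : ℚ) = n * ∑ i, (ℓ i : ℚ) := by
    simp [Finset.sum_const, card_univ, Finset.mul_sum]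
  have hL2 : ∑ i : Fin n, ∑ j : Fin n, (ℓ j : ℚ) = n * ∑ i, (ℓ i : ℚ) := by
    simp [Finset.sum_const, card_univ]
  have hL3 : ∑ i : Fin n, ∑ j : Fin n, (ℓ i : ℚ) * (ℓ j : ℚ) = (∑ i, (ℓ i : ℚ))^2 := by
    rw [sq, Finset.sum_mul_sum]
  have main : (∑ i : Fin n, ∑ j : Fin n, (nd i j : ℚ)) + (∑ i : Fin n, ∑ j : Fin n, (ℓ j : ℚ) * ((nd i j : ℚ) + 1))
      + ((∑ i : Fin n, ∑ j : Fin n, (ℓ i : ℚ) * ((nd i j : ℚ) + 1))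
        + (∑ i : Fin n, ∑ j : Fin n, (ℓ i : ℚ) * ((ℓ j : ℚ) * ((nd i j : ℚ) + 2))))
      = (∑ i : Fin n, ∑ j : Fin n, ((ℓ i : ℚ) + 1) * ((ℓ j : ℚ) + 1) * (nd i j : ℚ))
        + ((∑ i : Fin n, ∑ j : Fin n, (ℓ i : ℚ)) + (∑ i : Fin n, ∑ j : Fin n, (ℓ j : ℚ))
          + 2 * (∑ i : Fin n, ∑ j : Fin n, (ℓ i : ℚ) * (ℓ j : ℚ))) := by
    rw [combine, combine, combine]
    have h2 : 2 * (∑ i : Fin n, ∑ j : Fin n, (ℓ i : ℚ) * (ℓ j : ℚ))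
        = ∑ i : Fin n, ∑ j : Fin n, 2 * ((ℓ i : ℚ) * (ℓ j : ℚ)) := by
      rw [Finset.mul_sum]
      exact Finset.sum_congr rfl fun i _ => Finset.mul_sum _ _ _
    rw [h2, combine, combine, combine]
    exact Finset.sum_congr rfl fun i _ => Finset.sum_congr rfl fun j _ => by ring
  linarith [main, hL1, hL2, hL3]

end Aux

open SimpleGraph Finset in
/-- the Wiener index of a caterpillar with backbone v_1,…,v_n and
leaf numbers ℓ_1,…,ℓ_n equals
(Σℓ_i)² + (n−1)·Σℓ_i + ½·Σ_i Σ_j (ℓ_i+1)(ℓ_j+1)|i−j|. -/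
theorem stmt6 (n : ℕ) (hn : 1 ≤ n) (ℓ : Fin n → ℕ) :
    wienerIndex (caterpillar n ℓ) =
      (∑ i, (ℓ i : ℚ)) ^ 2 + ((n : ℚ) - 1) * (∑ i, (ℓ i : ℚ)) +
        (1 / 2) * ∑ i, ∑ j, ((ℓ i : ℚ) + 1) * ((ℓ j : ℚ) + 1) *
          |((i : ℕ) : ℚ) - ((j : ℕ) : ℚ)| := by
  unfold wienerIndex
  simp only [dist_eq_cd]
  rw [key_sum]
  have habs : ∀ i j : Fin n, ((ℓ i : ℚ) + 1) * ((ℓ j : ℚ) + 1) * |((i : ℕ) : ℚ) - ((j : ℕ) : ℚ)|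
      = ((ℓ i : ℚ) + 1) * ((ℓ j : ℚ) + 1) * (nd i j : ℚ) := fun i j => by rw [nd_cast]
  simp only [habs]
  ring
end

section
/- The dynamic programming recursion is correct: for k ≥ 2, with M = Σ_{i=1}^{k−1} α_i, the optimal value Z(k,m,L,R) of the constrained (k+2)-dimensional Wiener Max-QAP equals max{ Z(k−1, m+1, L+α_k, R) + 2(L+α_k)(M+R)(β_{m+1}−β_m), Z(k−1, m, L, R+α_k) + 2(L+M)(R+α_k)(β_{m+k−1}−β_{m+k−2}) }. -/
open Finset

/-- The objective value of the constrained (k+2)-dimensional Wiener Max-QAP of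
state (k,m,L,R) under the bijection σ assigning the values α_1,…,α_k
(represented by σ : Fin k ≃ Fin k, value α (σ s + 1)) to the points
β_m,…,β_{m+k−1}, with the extra value L fixed at β_m and R fixed at β_{m+k−1}. -/
def stateVal (α β : ℕ → ℤ) (k m : ℕ) (L R : ℤ) (σ : Equiv.Perm (Fin k)) : ℤ :=
  (∑ s : Fin k, ∑ t : Fin k,
      α ((σ s : ℕ) + 1) * α ((σ t : ℕ) + 1) * |β (m + (s : ℕ)) - β (m + (t : ℕ))|)
  + 2 * L * R * (β (m + k - 1) - β m)
  + 2 * (∑ s : Fin k, α ((σ s : ℕ) + 1) * L * (β (m + (s : ℕ)) - β m))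
  + 2 * (∑ s : Fin k, α ((σ s : ℕ) + 1) * R * (β (m + k - 1) - β (m + (s : ℕ))))

/-- Z(k,m,L,R): the optimal value of the state (k,m,L,R). -/
noncomputable def stateOpt (α β : ℕ → ℤ) (k m : ℕ) (L R : ℤ) : ℤ :=
  Finset.univ.sup' Finset.univ_nonempty (stateVal α β k m L R)

def V (N : ℕ) (w x : ℕ → ℤ) : ℤ :=
  ∑ s ∈ range N, ∑ t ∈ range N, w s * w t * |x s - x t|

lemma Vcongr {N : ℕ} {w w' x x' : ℕ → ℤ} (hw : ∀ i < N, w i = w' i)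
    (hx : ∀ i < N, x i = x' i) : V N w x = V N w' x' := by
  unfold V
  refine Finset.sum_congr rfl fun s hs => Finset.sum_congr rfl fun t ht => ?_
  simp only [mem_range] at hs ht
  rw [hw s hs, hw t ht, hx s hs, hx t ht]

lemma sum_split {N p q : ℕ} (hp : p < N) (hq : q < N) (hpq : p ≠ q) (f : ℕ → ℤ) :
    ∑ i ∈ range N, f i = f p + f q + ∑ i ∈ range N \ {p, q}, f i := by
  have h : range N = insert p (insert q (range N \ {p, q})) := by
    ext i
    simp only [Finset.mem_insert, Finset.mem_sdiff, Finset.mem_range,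
      Finset.mem_singleton]
    constructor
    · intro hi
      by_cases h1 : i = p
      · exact Or.inl h1
      by_cases h2 : i = q
      · exact Or.inr (Or.inl h2)
      · exact Or.inr (Or.inr ⟨hi, by tauto⟩)
    · rintro (rfl | rfl | ⟨hi, _⟩) <;> omega
  conv_lhs => rw [h]
  rw [Finset.sum_insert, Finset.sum_insert]
  · ring
  · simp only [Finset.mem_sdiff, Finset.mem_insert, Finset.mem_singleton]
    tauto
  · simp only [Finset.mem_insert, Finset.mem_sdiff, Finset.mem_singleton]
    tauto

lemma V_adj (N p : ℕ) (w x : ℕ → ℤ) (hx : Monotone x) (hp : p + 1 < N) :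
    V N (w ∘ Equiv.swap p (p+1)) x =
      V N w x + 2 * (w (p+1) - w p) * (x (p+1) - x p) *
        ((∑ i ∈ Ico (p+2) N, w i) - (∑ i ∈ range p, w i)) := by
  have hp1 : p < N := by omega
  have hpq : p ≠ p + 1 := by omega
  set s' : Finset ℕ := range N \ {p, p+1} with hs'
  have hmem : ∀ i ∈ s', i ≠ p ∧ i ≠ p + 1 := by
    intro i hi
    simp only [hs', Finset.mem_sdiff, Finset.mem_insert, Finset.mem_singleton,
      Finset.mem_range] at hi
    tauto
  have expand : ∀ u : ℕ → ℤ, (∀ i ∈ s', u i = w i) →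
      V N u x = (∑ i ∈ s', ∑ t ∈ s', w i * w t * |x i - x t|)
        + 2 * u p * (∑ i ∈ s', w i * |x i - x p|)
        + 2 * u (p+1) * (∑ i ∈ s', w i * |x i - x (p+1)|)
        + 2 * (u p * u (p+1)) * |x p - x (p+1)| := by
    intro u hu
    unfold V
    rw [sum_split hp1 hp hpq (fun s => ∑ t ∈ range N, u s * u t * |x s - x t|)]
    rw [sum_split hp1 hp hpq (fun t => u p * u t * |x p - x t|)]
    rw [sum_split hp1 hp hpq (fun t => u (p+1) * u t * |x (p+1) - x t|)]
    have hinner : ∀ i ∈ s', ∑ t ∈ range N, u i * u t * |x i - x t| =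
        u i * u p * |x i - x p| + u i * u (p+1) * |x i - x (p+1)|
          + ∑ t ∈ s', u i * u t * |x i - x t| := by
      intro i _
      rw [sum_split hp1 hp hpq (fun t => u i * u t * |x i - x t|)]
    rw [Finset.sum_congr rfl hinner]
    rw [Finset.sum_add_distrib, Finset.sum_add_distrib]
    have e1 : ∑ i ∈ s', u i * u p * |x i - x p| = u p * ∑ i ∈ s', w i * |x i - x p| := by
      rw [Finset.mul_sum]
      refine Finset.sum_congr rfl fun i hi => ?_
      rw [hu i hi]; ring
    have e2 : ∑ i ∈ s', u i * u (p+1) * |x i - x (p+1)|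
        = u (p+1) * ∑ i ∈ s', w i * |x i - x (p+1)| := by
      rw [Finset.mul_sum]
      refine Finset.sum_congr rfl fun i hi => ?_
      rw [hu i hi]; ring
    have e3 : ∑ t ∈ s', u p * u t * |x p - x t| = u p * ∑ i ∈ s', w i * |x i - x p| := by
      rw [Finset.mul_sum]
      refine Finset.sum_congr rfl fun i hi => ?_
      rw [hu i hi, abs_sub_comm]; ring
    have e4 : ∑ t ∈ s', u (p+1) * u t * |x (p+1) - x t|
        = u (p+1) * ∑ i ∈ s', w i * |x i - x (p+1)| := by
      rw [Finset.mul_sum]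
      refine Finset.sum_congr rfl fun i hi => ?_
      rw [hu i hi, abs_sub_comm]; ring
    have e5 : ∑ i ∈ s', ∑ t ∈ s', u i * u t * |x i - x t|
        = ∑ i ∈ s', ∑ t ∈ s', w i * w t * |x i - x t| := by
      refine Finset.sum_congr rfl fun i hi => Finset.sum_congr rfl fun t ht => ?_
      rw [hu i hi, hu t ht]
    rw [e1, e2, e3, e4, e5]
    have : |x (p+1) - x p| = |x p - x (p+1)| := abs_sub_comm _ _
    rw [this]
    have hxpp : x p * u p * 0 = 0 := by ring
    simp only [sub_self, abs_zero, mul_zero]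
    ring
  have h1 := expand w (fun i _ => rfl)
  have h2 := expand (w ∘ Equiv.swap p (p+1)) (by
    intro i hi
    obtain ⟨h1', h2'⟩ := hmem i hi
    simp only [Function.comp_apply, Equiv.swap_apply_of_ne_of_ne h1' h2'])
  have hsp : (w ∘ Equiv.swap p (p+1)) p = w (p+1) := by
    simp [Equiv.swap_apply_left]
  have hsq : (w ∘ Equiv.swap p (p+1)) (p+1) = w p := by
    simp [Equiv.swap_apply_right]
  rw [hsp, hsq] at h2
  -- difference of the two abs-sums over s'
  have hsplit : s' = range p ∪ Ico (p+2) N := by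
    ext i
    simp only [hs', Finset.mem_sdiff, Finset.mem_range, Finset.mem_insert,
      Finset.mem_singleton, Finset.mem_union, Finset.mem_Ico]
    omega
  have hdisj : Disjoint (range p) (Ico (p+2) N) := by
    rw [Finset.disjoint_left]
    intro a ha hb
    simp only [Finset.mem_range] at ha
    simp only [Finset.mem_Ico] at hb
    omega
  have hdiff : (∑ i ∈ s', w i * |x i - x p|) - (∑ i ∈ s', w i * |x i - x (p+1)|)
      = (x (p+1) - x p) * ((∑ i ∈ Ico (p+2) N, w i) - (∑ i ∈ range p, w i)) := by
    rw [hsplit, Finset.sum_union hdisj, Finset.sum_union hdisj]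
    have ha : ∑ i ∈ range p, w i * |x i - x p| - ∑ i ∈ range p, w i * |x i - x (p+1)|
        = -(x (p+1) - x p) * ∑ i ∈ range p, w i := by
      rw [← Finset.sum_sub_distrib]
      rw [Finset.mul_sum]
      refine Finset.sum_congr rfl fun i hi => ?_
      simp only [Finset.mem_range] at hi
      have h1' : x i ≤ x p := hx (by omega)
      have h2' : x i ≤ x (p+1) := hx (by omega)
      rw [abs_sub_comm (x i) (x p), abs_sub_comm (x i) (x (p+1)),
        abs_of_nonneg (by linarith), abs_of_nonneg (by linarith)]
      ring
    have hb : ∑ i ∈ Ico (p+2) N, w i * |x i - x p| - ∑ i ∈ Ico (p+2) N, w i * |x i - x (p+1)|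
        = (x (p+1) - x p) * ∑ i ∈ Ico (p+2) N, w i := by
      rw [← Finset.sum_sub_distrib, Finset.mul_sum]
      refine Finset.sum_congr rfl fun i hi => ?_
      simp only [Finset.mem_Ico] at hi
      have h1' : x p ≤ x i := hx (by omega)
      have h2' : x (p+1) ≤ x i := hx (by omega)
      rw [abs_of_nonneg (by linarith), abs_of_nonneg (by linarith)]
      ring
    linarith
  rw [h1, h2]
  linear_combination (2*(w (p+1) - w p)) * hdiff

lemma descendL (N : ℕ) (x : ℕ → ℤ) (hx : Monotone x) :
    ∀ r, 1 ≤ r → r ≤ N - 2 → ∀ w : ℕ → ℤ, (∀ i, 0 ≤ w i) →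
    (∀ i, 1 ≤ i → i ≤ N - 2 → w i ≤ w r) →
    (∑ i ∈ range (r-1), w i) ≤ (∑ i ∈ Ico (r+1) N, w i) →
    ∃ π : Equiv.Perm ℕ, (∀ i, ¬(1 ≤ i ∧ i ≤ N - 2) → π i = i) ∧ π 1 = r ∧
      V N w x ≤ V N (w ∘ π) x := by
  intro r hr1
  induction r, hr1 using Nat.le_induction with
  | base =>
    intro _ w _ _ _
    exact ⟨Equiv.refl ℕ, fun i _ => rfl, rfl, le_of_eq rfl⟩
  | succ r hr ih =>
    intro hr2 w hw0 hmax hC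
    have hrN : r + 1 < N := by omega
    have hswap := V_adj N r w x hx (by omega)
    have hCr : (∑ i ∈ range r, w i) ≤ ∑ i ∈ Ico (r+2) N, w i := by
      have : r + 1 - 1 = r := by omega
      rw [this] at hC
      exact hC
    have hstep : V N w x ≤ V N (w ∘ Equiv.swap r (r+1)) x := by
      rw [hswap]
      have h1 : 0 ≤ w (r+1) - w r := by
        have := hmax r (by omega) (by omega)
        linarith
      have h2 : 0 ≤ x (r+1) - x r := by
        have := hx (Nat.le_succ r)
        linarith
      have h3 : 0 ≤ (∑ i ∈ Ico (r+2) N, w i) - (∑ i ∈ range r, w i) := by linarith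
      nlinarith [mul_nonneg (mul_nonneg h1 h2) h3]
    set w1 : ℕ → ℤ := w ∘ Equiv.swap r (r+1) with hw1
    have hval : ∀ i, w1 i = w (Equiv.swap r (r+1) i) := fun i => rfl
    have hw1r : w1 r = w (r+1) := by rw [hval, Equiv.swap_apply_left]
    have hswmem : ∀ i, 1 ≤ i → i ≤ N - 2 →
        1 ≤ (Equiv.swap r (r+1) i : ℕ) ∧ (Equiv.swap r (r+1) i : ℕ) ≤ N - 2 := by
      intro i h1 h2
      rcases eq_or_ne i r with rfl | hir
      · rw [Equiv.swap_apply_left]; omega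
      rcases eq_or_ne i (r+1) with rfl | hir1
      · rw [Equiv.swap_apply_right]; omega
      · rw [Equiv.swap_apply_of_ne_of_ne hir hir1]; omega
    obtain ⟨π1, hfix1, hπ1, hV1⟩ := ih (by omega) w1
      (fun i => hw0 _)
      (by
        intro i h1 h2
        rw [hw1r]
        obtain ⟨ha, hb⟩ := hswmem i h1 h2
        exact hmax _ ha hb)
      (by
        -- ∑ range (r-1) w1 ≤ ∑ Ico (r+1) N w1
        have hl : ∑ i ∈ range (r-1), w1 i = ∑ i ∈ range (r-1), w i := by
          refine Finset.sum_congr rfl fun i hi => ?_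
          simp only [Finset.mem_range] at hi
          rw [hval, Equiv.swap_apply_of_ne_of_ne (by omega) (by omega)]
        have hrr : ∑ i ∈ Ico (r+1) N, w1 i
            = w1 (r+1) + ∑ i ∈ Ico (r+2) N, w1 i := by
          rw [Finset.sum_eq_sum_Ico_succ_bot (by omega)]
        have hr2' : ∑ i ∈ Ico (r+2) N, w1 i = ∑ i ∈ Ico (r+2) N, w i := by
          refine Finset.sum_congr rfl fun i hi => ?_
          simp only [Finset.mem_Ico] at hi
          rw [hval, Equiv.swap_apply_of_ne_of_ne (by omega) (by omega)]
        have hw1r1 : w1 (r+1) = w r := by rw [hval, Equiv.swap_apply_right]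
        have hmono : ∑ i ∈ range (r-1), w i ≤ ∑ i ∈ range r, w i := by
          apply Finset.sum_le_sum_of_subset_of_nonneg
          · apply Finset.range_subset_range.2; omega
          · intro i _ _; exact hw0 i
        rw [hl, hrr, hr2', hw1r1]
        have := hw0 r
        linarith)
    refine ⟨π1.trans (Equiv.swap r (r+1)), ?_, ?_, ?_⟩
    · intro i hi
      have h1 := hfix1 i hi
      simp only [Equiv.trans_apply, h1]
      exact Equiv.swap_apply_of_ne_of_ne (by omega) (by omega)
    · simp only [Equiv.trans_apply, hπ1, Equiv.swap_apply_left]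
    · calc V N w x ≤ V N w1 x := hstep
        _ ≤ V N (w1 ∘ π1) x := hV1
        _ = V N (w ∘ (π1.trans (Equiv.swap r (r+1)))) x := rfl

lemma descendR (N : ℕ) (x : ℕ → ℤ) (hx : Monotone x) :
    ∀ t r, r + t = N - 2 → 1 ≤ r → ∀ w : ℕ → ℤ, (∀ i, 0 ≤ w i) →
    (∀ i, 1 ≤ i → i ≤ N - 2 → w i ≤ w r) →
    (∑ i ∈ Ico (r+2) N, w i) ≤ (∑ i ∈ range r, w i) →
    ∃ π : Equiv.Perm ℕ, (∀ i, ¬(1 ≤ i ∧ i ≤ N - 2) → π i = i) ∧ π (N-2) = r ∧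
      V N w x ≤ V N (w ∘ π) x := by
  intro t
  induction t with
  | zero =>
    intro r hrt hr1 w _ _ _
    have : N - 2 = r := by omega
    exact ⟨Equiv.refl ℕ, fun i _ => rfl, by rw [this]; rfl, le_of_eq rfl⟩
  | succ t ih =>
    intro r hrt hr1 w hw0 hmax hC
    have hrN : r + 1 ≤ N - 2 := by omega
    -- N ≥ r + 3? r + t + 1 = N - 2, so N ≥ r+3... need N ≥ 2 to be safe: N-2 ≥ r+1 ≥ 2
    have hN : r + 2 < N := by omega
    have hswap := V_adj N r w x hx (by omega)
    have hstep : V N w x ≤ V N (w ∘ Equiv.swap r (r+1)) x := by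
      rw [hswap]
      have h1 : w (r+1) - w r ≤ 0 := by
        have := hmax (r+1) (by omega) (by omega)
        linarith
      have h2 : 0 ≤ x (r+1) - x r := by
        have := hx (Nat.le_succ r)
        linarith
      have h3 : (∑ i ∈ Ico (r+2) N, w i) - (∑ i ∈ range r, w i) ≤ 0 := by linarith
      nlinarith [mul_nonneg (mul_nonneg (neg_nonneg.2 h1) h2) (neg_nonneg.2 h3)]
    set w1 : ℕ → ℤ := w ∘ Equiv.swap r (r+1) with hw1
    have hval : ∀ i, w1 i = w (Equiv.swap r (r+1) i) := fun i => rfl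
    have hw1r1 : w1 (r+1) = w r := by rw [hval, Equiv.swap_apply_right]
    have hw1r : w1 r = w (r+1) := by rw [hval, Equiv.swap_apply_left]
    have hswmem : ∀ i, 1 ≤ i → i ≤ N - 2 →
        1 ≤ (Equiv.swap r (r+1) i : ℕ) ∧ (Equiv.swap r (r+1) i : ℕ) ≤ N - 2 := by
      intro i h1 h2
      rcases eq_or_ne i r with rfl | hir
      · rw [Equiv.swap_apply_left]; omega
      rcases eq_or_ne i (r+1) with rfl | hir1
      · rw [Equiv.swap_apply_right]; omega
      · rw [Equiv.swap_apply_of_ne_of_ne hir hir1]; omega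
    obtain ⟨π1, hfix1, hπ1, hV1⟩ := ih (r+1) (by omega) (by omega) w1
      (fun i => hw0 _)
      (by
        intro i h1 h2
        rw [hw1r1]
        obtain ⟨ha, hb⟩ := hswmem i h1 h2
        exact hmax _ ha hb)
      (by
        have hl : ∑ i ∈ Ico (r+3) N, w1 i = ∑ i ∈ Ico (r+3) N, w i := by
          refine Finset.sum_congr rfl fun i hi => ?_
          simp only [Finset.mem_Ico] at hi
          rw [hval, Equiv.swap_apply_of_ne_of_ne (by omega) (by omega)]
        have hsub : ∑ i ∈ Ico (r+3) N, w i ≤ ∑ i ∈ Ico (r+2) N, w i := by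
          apply Finset.sum_le_sum_of_subset_of_nonneg
          · apply Finset.Ico_subset_Ico (by omega) le_rfl
          · intro i _ _; exact hw0 i
        have hrsum : ∑ i ∈ range (r+1), w1 i = (∑ i ∈ range r, w i) + w (r+1) := by
          rw [Finset.sum_range_succ, hw1r]
          congr 1
          refine Finset.sum_congr rfl fun i hi => ?_
          simp only [Finset.mem_range] at hi
          rw [hval, Equiv.swap_apply_of_ne_of_ne (by omega) (by omega)]
        rw [hl, hrsum]
        have := hw0 (r+1)
        linarith)
    refine ⟨π1.trans (Equiv.swap r (r+1)), ?_, ?_, ?_⟩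
    · intro i hi
      have h1 := hfix1 i hi
      simp only [Equiv.trans_apply, h1]
      exact Equiv.swap_apply_of_ne_of_ne (by omega) (by omega)
    · simp only [Equiv.trans_apply, hπ1, Equiv.swap_apply_right]
    · calc V N w x ≤ V N w1 x := hstep
        _ ≤ V N (w1 ∘ π1) x := hV1
        _ = V N (w ∘ (π1.trans (Equiv.swap r (r+1)))) x := rfl

lemma Vexchange (N : ℕ) (x w : ℕ → ℤ) (hx : Monotone x) (hw0 : ∀ i, 0 ≤ w i)
    (r : ℕ) (hr1 : 1 ≤ r) (hr2 : r ≤ N - 2)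
    (hmax : ∀ i, 1 ≤ i → i ≤ N - 2 → w i ≤ w r) :
    ∃ π : Equiv.Perm ℕ, (∀ i, ¬(1 ≤ i ∧ i ≤ N - 2) → π i = i) ∧
      (π 1 = r ∨ π (N-2) = r) ∧ V N w x ≤ V N (w ∘ π) x := by
  rcases le_total (∑ i ∈ range (r-1), w i) (∑ i ∈ Ico (r+1) N, w i) with h | h
  · obtain ⟨π, hfix, hπ, hV⟩ := descendL N x hx r hr1 hr2 w hw0 hmax h
    exact ⟨π, hfix, Or.inl hπ, hV⟩
  · have hC : (∑ i ∈ Ico (r+2) N, w i) ≤ ∑ i ∈ range r, w i := by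
      have h1 : ∑ i ∈ Ico (r+2) N, w i ≤ ∑ i ∈ Ico (r+1) N, w i := by
        apply Finset.sum_le_sum_of_subset_of_nonneg
        · exact Finset.Ico_subset_Ico (by omega) le_rfl
        · intro i _ _; exact hw0 i
      have h2 : ∑ i ∈ range (r-1), w i ≤ ∑ i ∈ range r, w i := by
        apply Finset.sum_le_sum_of_subset_of_nonneg
        · exact Finset.range_subset_range.2 (by omega)
        · intro i _ _; exact hw0 i
      linarith
    obtain ⟨π, hfix, hπ, hV⟩ := descendR N x hx (N - 2 - r) r (by omega) hr1 w hw0 hmax hC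
    exact ⟨π, hfix, Or.inr hπ, hV⟩

def wf (α : ℕ → ℤ) (K : ℕ) (L R : ℤ) (σ : Equiv.Perm (Fin (K+1))) : ℕ → ℤ :=
  fun i => if h : 1 ≤ i ∧ i ≤ K+1 then α ((σ ⟨i-1, by omega⟩ : Fin (K+1)) + 1)
           else if i = 0 then L else R

def cf (β : ℕ → ℤ) (K m : ℕ) : ℕ → ℤ := fun j => β (m + min (j-1) K)

lemma cf_mono {β : ℕ → ℤ} (hβ : Monotone β) (K m : ℕ) : Monotone (cf β K m) := by
  intro a b hab
  apply hβ
  have h : (a-1) ⊓ K ≤ (b-1) ⊓ K := by omega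
  omega

lemma split3 (M : ℕ) (f : ℕ → ℤ) :
    ∑ i ∈ range (M+3), f i = f 0 + f (M+2) + ∑ i ∈ range (M+1), f (i+1) := by
  rw [Finset.sum_range_succ, Finset.sum_range_succ']
  ring

lemma wf_eval0 (α : ℕ → ℤ) (K : ℕ) (L R : ℤ) (σ : Equiv.Perm (Fin (K+1))) :
    wf α K L R σ 0 = L := by simp [wf]

lemma wf_evalTop (α : ℕ → ℤ) (K : ℕ) (L R : ℤ) (σ : Equiv.Perm (Fin (K+1))) :
    wf α K L R σ (K+2) = R := by
  have h : ¬(1 ≤ K+2 ∧ K+2 ≤ K+1) := by omega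
  simp [wf, h]

lemma wf_evalMid (α : ℕ → ℤ) (K : ℕ) (L R : ℤ) (σ : Equiv.Perm (Fin (K+1)))
    (s : Fin (K+1)) : wf α K L R σ ((s : ℕ) + 1) = α ((σ s : ℕ) + 1) := by
  have h : 1 ≤ (s:ℕ)+1 ∧ (s:ℕ)+1 ≤ K+1 := ⟨by omega, by omega⟩
  have he : (⟨(s:ℕ)+1-1, by omega⟩ : Fin (K+1)) = s := by
    apply Fin.ext
    simp
  rw [wf]
  simp only [dif_pos h, he]

lemma cf_eval0 (β : ℕ → ℤ) (K m : ℕ) : cf β K m 0 = β m := by simp [cf]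

lemma cf_evalTop (β : ℕ → ℤ) (K m : ℕ) : cf β K m (K+2) = β (m+K) := by
  simp [cf]

lemma cf_evalMid (β : ℕ → ℤ) (K m : ℕ) (s : ℕ) (hs : s ≤ K) :
    cf β K m (s+1) = β (m+s) := by
  simp [cf, Nat.min_eq_left hs]

lemma bridge (α β : ℕ → ℤ) (hβ : Monotone β) (K m : ℕ) (L R : ℤ)
    (σ : Equiv.Perm (Fin (K+1))) :
    stateVal α β (K+1) m L R σ = V (K+3) (wf α K L R σ) (cf β K m) := by
  set w := wf α K L R σ with hw
  set x := cf β K m with hxdef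
  have hws : ∀ s : Fin (K+1), α ((σ s : ℕ) + 1) = w ((s : ℕ) + 1) :=
    fun s => (wf_evalMid α K L R σ s).symm
  have hcs : ∀ s : Fin (K+1), β (m + (s : ℕ)) = x ((s : ℕ) + 1) :=
    fun s => (cf_evalMid β K m s (by omega)).symm
  have hβm : β m = x 0 := (cf_eval0 β K m).symm
  have hβK : β (m + (K+1) - 1) = x (K+2) := by
    rw [show m + (K+1) - 1 = m + K from by omega]
    exact (cf_evalTop β K m).symm
  have hw0 : w 0 = L := wf_eval0 α K L R σ
  have hwT : w (K+2) = R := wf_evalTop α K L R σ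
  rw [stateVal]
  simp only [hws, hcs, hβm, hβK]
  rw [V]
  rw [split3 K (fun s => ∑ t ∈ range (K+3), w s * w t * |x s - x t|)]
  have hinner : ∀ s : ℕ, ∑ t ∈ range (K+3), w s * w t * |x s - x t|
      = w s * w 0 * |x s - x 0| + w s * w (K+2) * |x s - x (K+2)|
        + ∑ t ∈ range (K+1), w s * w (t+1) * |x s - x (t+1)| := by
    intro s
    rw [split3 K (fun t => w s * w t * |x s - x t|)]
  simp only [hinner]
  -- convert Fin sums to range sums
  have hsum1 : ∀ g : ℕ → ℤ, (∑ s : Fin (K+1), g (s : ℕ)) = ∑ s ∈ range (K+1), g s :=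
    fun g => Fin.sum_univ_eq_sum_range g (K+1)
  rw [show (∑ s : Fin (K+1), ∑ t : Fin (K+1),
        w ((s:ℕ)+1) * w ((t:ℕ)+1) * |x ((s:ℕ)+1) - x ((t:ℕ)+1)|)
      = ∑ s ∈ range (K+1), ∑ t ∈ range (K+1),
        w (s+1) * w (t+1) * |x (s+1) - x (t+1)| from by
    rw [← hsum1 (fun s => ∑ t ∈ range (K+1), w (s+1) * w (t+1) * |x (s+1) - x (t+1)|)]
    exact Finset.sum_congr rfl fun s _ =>
      hsum1 (fun t => w ((s:ℕ)+1) * w (t+1) * |x ((s:ℕ)+1) - x (t+1)|)]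
  rw [hsum1 (fun s => w (s+1) * L * (x (s+1) - x 0))]
  rw [hsum1 (fun s => w (s+1) * R * (x (K+2) - x (s+1)))]
  -- x is monotone
  have hxm : Monotone x := cf_mono hβ K m
  -- absolute values at special positions
  have habs0 : ∀ t ∈ range (K+1), w 0 * w (t+1) * |x 0 - x (t+1)|
      = L * (w (t+1) * (x (t+1) - x 0)) := by
    intro t _
    rw [hw0, abs_sub_comm, abs_of_nonneg (sub_nonneg.2 (hxm (by omega)))]
    ring
  have habsT : ∀ t ∈ range (K+1), w (K+2) * w (t+1) * |x (K+2) - x (t+1)|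
      = R * (w (t+1) * (x (K+2) - x (t+1))) := by
    intro t ht
    simp only [Finset.mem_range] at ht
    rw [hwT, abs_of_nonneg (sub_nonneg.2 (hxm (by omega)))]
    ring
  have habs0' : ∀ s ∈ range (K+1), w (s+1) * w 0 * |x (s+1) - x 0|
      = L * (w (s+1) * (x (s+1) - x 0)) := by
    intro s _
    rw [hw0, abs_of_nonneg (sub_nonneg.2 (hxm (by omega)))]
    ring
  have habsT' : ∀ s ∈ range (K+1), w (s+1) * w (K+2) * |x (s+1) - x (K+2)|
      = R * (w (s+1) * (x (K+2) - x (s+1))) := by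
    intro s hs
    simp only [Finset.mem_range] at hs
    rw [hwT, abs_sub_comm, abs_of_nonneg (sub_nonneg.2 (hxm (by omega)))]
    ring
  have habsC : |x 0 - x (K+2)| = x (K+2) - x 0 := by
    rw [abs_sub_comm, abs_of_nonneg (sub_nonneg.2 (hxm (by omega)))]
  have habsC' : |x (K+2) - x 0| = x (K+2) - x 0 := by
    rw [abs_of_nonneg (sub_nonneg.2 (hxm (by omega)))]
  rw [Finset.sum_congr rfl habs0, Finset.sum_congr rfl habsT]
  rw [Finset.sum_congr rfl (fun s hs => by
    rw [habs0' s hs, habsT' s hs] : ∀ s ∈ range (K+1),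
      (w (s+1) * w 0 * |x (s+1) - x 0| + w (s+1) * w (K+2) * |x (s+1) - x (K+2)|
        + ∑ t ∈ range (K+1), w (s+1) * w (t+1) * |x (s+1) - x (t+1)|)
      = (L * (w (s+1) * (x (s+1) - x 0)) + R * (w (s+1) * (x (K+2) - x (s+1)))
        + ∑ t ∈ range (K+1), w (s+1) * w (t+1) * |x (s+1) - x (t+1)|))]
  rw [habsC, habsC', hw0, hwT]
  simp only [sub_self, abs_zero, mul_zero, zero_mul, Finset.sum_add_distrib,
    ← Finset.mul_sum]
  -- remaining: pure algebra with sums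
  have e1 : ∀ s ∈ range (K+1), w (s+1) * L * (x (s+1) - x 0)
      = L * (w (s+1) * (x (s+1) - x 0)) := fun s _ => by ring
  have e2 : ∀ s ∈ range (K+1), w (s+1) * R * (x (K+2) - x (s+1))
      = R * (w (s+1) * (x (K+2) - x (s+1))) := fun s _ => by ring
  rw [Finset.sum_congr rfl e1, Finset.sum_congr rfl e2]
  rw [← Finset.mul_sum, ← Finset.mul_sum]
  ring

lemma split2 (M : ℕ) (f : ℕ → ℤ) :
    ∑ i ∈ range (M+2), f i = f 0 + f 1 + ∑ i ∈ range M, f (i+2) := by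
  rw [Finset.sum_range_succ', Finset.sum_range_succ']
  ring

lemma split1 (M : ℕ) (f : ℕ → ℤ) :
    ∑ i ∈ range (M+1), f i = f 0 + ∑ i ∈ range M, f (i+1) := by
  rw [Finset.sum_range_succ']
  ring

lemma VL (N : ℕ) (w x : ℕ → ℤ) (hx : Monotone x) (h01 : x 0 = x 1) :
    V (N+2) w x = V (N+1) (fun i => if i = 0 then w 0 + w 1 else w (i+1))
        (fun i => if i = 0 then x 2 else x (i+1))
      + 2 * (w 0 + w 1) * (∑ i ∈ range N, w (i+2)) * (x 2 - x 0) := by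
  set w' : ℕ → ℤ := fun i => if i = 0 then w 0 + w 1 else w (i+1) with hw'
  set x' : ℕ → ℤ := fun i => if i = 0 then x 2 else x (i+1) with hx'
  have hw'0 : w' 0 = w 0 + w 1 := rfl
  have hx'0 : x' 0 = x 2 := rfl
  have hw'i : ∀ i : ℕ, w' (i+1) = w (i+2) := fun i => by simp [hw']
  have hx'i : ∀ i : ℕ, x' (i+1) = x (i+2) := fun i => by simp [hx']
  rw [V, V]
  rw [split2 N (fun s => ∑ t ∈ range (N+2), w s * w t * |x s - x t|)]
  have hinL : ∀ s : ℕ, ∑ t ∈ range (N+2), w s * w t * |x s - x t|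
      = w s * w 0 * |x s - x 0| + w s * w 1 * |x s - x 1|
        + ∑ t ∈ range N, w s * w (t+2) * |x s - x (t+2)| := by
    intro s
    rw [split2 N (fun t => w s * w t * |x s - x t|)]
  simp only [hinL]
  rw [split1 N (fun s => ∑ t ∈ range (N+1), w' s * w' t * |x' s - x' t|)]
  have hinR : ∀ s : ℕ, ∑ t ∈ range (N+1), w' s * w' t * |x' s - x' t|
      = w' s * w' 0 * |x' s - x' 0|
        + ∑ t ∈ range N, w' s * w' (t+1) * |x' s - x' (t+1)| := by
    intro s
    rw [split1 N (fun t => w' s * w' t * |x' s - x' t|)]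
  simp only [hinR]
  simp only [hw'0, hx'0, hw'i, hx'i]
  -- kill x 1
  simp only [← h01, sub_self, abs_zero, mul_zero, zero_add, add_zero]
  -- absolute values
  have habs : ∀ a b : ℕ, a ≤ b → |x a - x b| = x b - x a := fun a b h => by
    rw [abs_sub_comm, abs_of_nonneg (sub_nonneg.2 (hx h))]
  have habs' : ∀ a b : ℕ, a ≤ b → |x b - x a| = x b - x a := fun a b h => by
    rw [abs_of_nonneg (sub_nonneg.2 (hx h))]
  have c1 : ∀ t ∈ range N, w 0 * w (t+2) * |x 0 - x (t+2)|
      = w 0 * (w (t+2) * x (t+2) - w (t+2) * x 0) := by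
    intro t _
    rw [habs 0 (t+2) (by omega)]; ring
  have c2 : ∀ t ∈ range N, w 1 * w (t+2) * |x 0 - x (t+2)|
      = w 1 * (w (t+2) * x (t+2) - w (t+2) * x 0) := by
    intro t _
    rw [habs 0 (t+2) (by omega)]; ring
  have c3 : ∀ s ∈ range N, w (s+2) * w 0 * |x (s+2) - x 0|
      = w 0 * (w (s+2) * x (s+2) - w (s+2) * x 0) := by
    intro s _
    rw [habs' 0 (s+2) (by omega)]; ring
  have c4 : ∀ s ∈ range N, w (s+2) * w 1 * |x (s+2) - x 0|
      = w 1 * (w (s+2) * x (s+2) - w (s+2) * x 0) := by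
    intro s _
    rw [habs' 0 (s+2) (by omega)]; ring
  have d1 : ∀ t ∈ range N, (w 0 + w 1) * w (t+2) * |x 2 - x (t+2)|
      = (w 0 + w 1) * (w (t+2) * x (t+2) - w (t+2) * x 2) := by
    intro t _
    rw [habs 2 (t+2) (by omega)]; ring
  have d2 : ∀ s ∈ range N, w (s+2) * (w 0 + w 1) * |x (s+2) - x 2|
      = (w 0 + w 1) * (w (s+2) * x (s+2) - w (s+2) * x 2) := by
    intro s _
    rw [habs' 2 (s+2) (by omega)]; ring
  rw [Finset.sum_congr rfl c1, Finset.sum_congr rfl c2, Finset.sum_congr rfl d1]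
  rw [Finset.sum_congr rfl (fun s hs => by rw [c3 s hs, c4 s hs] : ∀ s ∈ range N,
      (w (s+2) * w 0 * |x (s+2) - x 0| + w (s+2) * w 1 * |x (s+2) - x 0|
        + ∑ t ∈ range N, w (s+2) * w (t+2) * |x (s+2) - x (t+2)|)
      = (w 0 * (w (s+2) * x (s+2) - w (s+2) * x 0)
        + w 1 * (w (s+2) * x (s+2) - w (s+2) * x 0)
        + ∑ t ∈ range N, w (s+2) * w (t+2) * |x (s+2) - x (t+2)|))]
  rw [Finset.sum_congr rfl (fun s hs => by rw [d2 s hs] : ∀ s ∈ range N,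
      (w (s+2) * (w 0 + w 1) * |x (s+2) - x 2|
        + ∑ t ∈ range N, w (s+2) * w (t+2) * |x (s+2) - x (t+2)|)
      = ((w 0 + w 1) * (w (s+2) * x (s+2) - w (s+2) * x 2)
        + ∑ t ∈ range N, w (s+2) * w (t+2) * |x (s+2) - x (t+2)|))]
  simp only [Finset.sum_add_distrib, ← Finset.mul_sum]
  have key : ∀ c : ℤ, ∑ t ∈ range N, (w (t+2) * x (t+2) - w (t+2) * c)
      = (∑ t ∈ range N, w (t+2) * x (t+2)) - c * (∑ t ∈ range N, w (t+2)) := by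
    intro c
    rw [Finset.sum_sub_distrib]
    congr 1
    rw [Finset.mul_sum]
    exact Finset.sum_congr rfl fun t _ => by ring
  simp only [key]
  ring

lemma splitT2 (M : ℕ) (f : ℕ → ℤ) :
    ∑ i ∈ range (M+3), f i = (∑ i ∈ range (M+1), f i) + f (M+1) + f (M+2) := by
  rw [Finset.sum_range_succ, Finset.sum_range_succ]

lemma splitT1 (M : ℕ) (f : ℕ → ℤ) :
    ∑ i ∈ range (M+2), f i = (∑ i ∈ range (M+1), f i) + f (M+1) := by
  rw [Finset.sum_range_succ]

lemma VR (K : ℕ) (w x : ℕ → ℤ) (hx : Monotone x) (hlast : x (K+1) = x (K+2)) :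
    V (K+3) w x = V (K+2) (fun i => if i = K+1 then w (K+1) + w (K+2) else w i)
        (fun i => if i = K+1 then x K else x i)
      + 2 * (w (K+1) + w (K+2)) * (∑ i ∈ range (K+1), w i) * (x (K+1) - x K) := by
  set w' : ℕ → ℤ := fun i => if i = K+1 then w (K+1) + w (K+2) else w i with hw'
  set x' : ℕ → ℤ := fun i => if i = K+1 then x K else x i with hx'
  have hw'T : w' (K+1) = w (K+1) + w (K+2) := by simp [hw']
  have hx'T : x' (K+1) = x K := by simp [hx']
  have hw'i : ∀ i ∈ range (K+1), w' i = w i := by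
    intro i hi
    simp only [Finset.mem_range] at hi
    simp [hw', Nat.ne_of_lt hi]
  have hx'i : ∀ i ∈ range (K+1), x' i = x i := by
    intro i hi
    simp only [Finset.mem_range] at hi
    simp [hx', Nat.ne_of_lt hi]
  rw [V, V]
  rw [splitT2 K (fun s => ∑ t ∈ range (K+3), w s * w t * |x s - x t|)]
  have hinL : ∀ s : ℕ, ∑ t ∈ range (K+3), w s * w t * |x s - x t|
      = (∑ t ∈ range (K+1), w s * w t * |x s - x t|)
        + w s * w (K+1) * |x s - x (K+1)| + w s * w (K+2) * |x s - x (K+2)| := by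
    intro s
    rw [splitT2 K (fun t => w s * w t * |x s - x t|)]
  simp only [hinL]
  rw [splitT1 K (fun s => ∑ t ∈ range (K+2), w' s * w' t * |x' s - x' t|)]
  have hinR : ∀ s : ℕ, ∑ t ∈ range (K+2), w' s * w' t * |x' s - x' t|
      = (∑ t ∈ range (K+1), w' s * w' t * |x' s - x' t|)
        + w' s * w' (K+1) * |x' s - x' (K+1)| := by
    intro s
    rw [splitT1 K (fun t => w' s * w' t * |x' s - x' t|)]
  simp only [hinR]
  rw [hw'T, hx'T]
  -- replace x (K+2) by x (K+1) everywhere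
  simp only [← hlast, sub_self, abs_zero, mul_zero, zero_add, add_zero]
  have habs : ∀ a b : ℕ, a ≤ b → |x a - x b| = x b - x a := fun a b h => by
    rw [abs_sub_comm, abs_of_nonneg (sub_nonneg.2 (hx h))]
  have habs' : ∀ a b : ℕ, a ≤ b → |x b - x a| = x b - x a := fun a b h => by
    rw [abs_of_nonneg (sub_nonneg.2 (hx h))]
  -- inner RHS sums: replace w'/x' by w/x on range (K+1)
  have hrow : ∀ s ∈ range (K+1), (∑ t ∈ range (K+1), w' s * w' t * |x' s - x' t|)
      = ∑ t ∈ range (K+1), w s * w t * |x s - x t| := by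
    intro s hs
    refine Finset.sum_congr rfl fun t ht => ?_
    rw [hw'i s hs, hw'i t ht, hx'i s hs, hx'i t ht]
  -- cross terms
  have c1 : ∀ t ∈ range (K+1), w (K+1) * w t * |x (K+1) - x t|
      = w (K+1) * (w t * x (K+1) - w t * x t) := by
    intro t ht
    simp only [Finset.mem_range] at ht
    rw [habs' t (K+1) (by omega)]; ring
  have c2 : ∀ t ∈ range (K+1), w (K+2) * w t * |x (K+1) - x t|
      = w (K+2) * (w t * x (K+1) - w t * x t) := by
    intro t ht
    simp only [Finset.mem_range] at ht
    rw [habs' t (K+1) (by omega)]; ring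
  have rowL : ∀ s ∈ range (K+1),
      (∑ t ∈ range (K+1), w s * w t * |x s - x t| + w s * w (K+1) * |x s - x (K+1)| +
        w s * w (K+2) * |x s - x (K+1)|)
      = (∑ t ∈ range (K+1), w s * w t * |x s - x t|)
        + (w (K+1) * (w s * x (K+1) - w s * x s) + w (K+2) * (w s * x (K+1) - w s * x s)) := by
    intro s hs
    simp only [Finset.mem_range] at hs
    rw [habs s (K+1) (by omega)]
    ring
  have rowR : ∀ s ∈ range (K+1),
      (∑ t ∈ range (K+1), w' s * w' t * |x' s - x' t| +
        w' s * (w (K+1) + w (K+2)) * |x' s - x K|)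
      = (∑ t ∈ range (K+1), w s * w t * |x s - x t|)
        + (w (K+1) * (w s * x K - w s * x s) + w (K+2) * (w s * x K - w s * x s)) := by
    intro s hs
    rw [hrow s hs, hw'i s hs, hx'i s hs]
    have hsK : s ≤ K := by
      simp only [Finset.mem_range] at hs
      omega
    rcases le_or_gt s K with _ | _
    · rw [abs_sub_comm, habs' s K hsK]
      ring
    · omega
  have midR : ∀ t ∈ range (K+1), (w (K+1) + w (K+2)) * w' t * |x K - x' t|
      = w (K+1) * (w t * x K - w t * x t) + w (K+2) * (w t * x K - w t * x t) := by
    intro t ht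
    rw [hw'i t ht, hx'i t ht]
    have htK : t ≤ K := by
      simp only [Finset.mem_range] at ht
      omega
    rw [habs' t K htK]
    ring
  rw [Finset.sum_congr rfl rowL, Finset.sum_congr rfl rowR,
    Finset.sum_congr rfl midR, Finset.sum_congr rfl c1, Finset.sum_congr rfl c2]
  simp only [Finset.sum_add_distrib, ← Finset.mul_sum]
  have key : ∀ c : ℤ, ∑ t ∈ range (K+1), (w t * c - w t * x t)
      = c * (∑ t ∈ range (K+1), w t) - (∑ t ∈ range (K+1), w t * x t) := by
    intro c
    rw [Finset.sum_sub_distrib]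
    congr 1
    rw [Finset.mul_sum]
    exact Finset.sum_congr rfl fun t _ => by ring
  simp only [key]
  ring

def extL (j : ℕ) (τ : Equiv.Perm (Fin (j+1))) : Equiv.Perm (Fin (j+2)) :=
  (finSuccEquiv (j+1)).trans ((Equiv.optionCongr τ).trans (finSuccEquivLast).symm)

def extR (j : ℕ) (τ : Equiv.Perm (Fin (j+1))) : Equiv.Perm (Fin (j+2)) :=
  finSuccEquivLast.trans ((Equiv.optionCongr τ).trans (finSuccEquivLast).symm)

lemma extL_zero (j : ℕ) (τ : Equiv.Perm (Fin (j+1))) :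
    extL j τ 0 = Fin.last (j+1) := by
  simp [extL]

lemma extL_succ (j : ℕ) (τ : Equiv.Perm (Fin (j+1))) (i : Fin (j+1)) :
    extL j τ i.succ = (τ i).castSucc := by
  simp [extL]

lemma extR_last (j : ℕ) (τ : Equiv.Perm (Fin (j+1))) :
    extR j τ (Fin.last (j+1)) = Fin.last (j+1) := by
  simp [extR]

lemma extR_castSucc (j : ℕ) (τ : Equiv.Perm (Fin (j+1))) (i : Fin (j+1)) :
    extR j τ i.castSucc = (τ i).castSucc := by
  simp [extR]

lemma surjL (j : ℕ) (σ : Equiv.Perm (Fin (j+2))) (h : σ 0 = Fin.last (j+1)) :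
    ∃ τ : Equiv.Perm (Fin (j+1)), extL j τ = σ := by
  have hne : ∀ i : Fin (j+1), σ i.succ ≠ Fin.last (j+1) := by
    intro i hc
    have : σ i.succ = σ 0 := by rw [hc, h]
    have := σ.injective this
    exact (Fin.succ_ne_zero i) this
  have hne' : ∀ y : Fin (j+1), σ.symm y.castSucc ≠ 0 := by
    intro y hc
    have : y.castSucc = σ 0 := by rw [← hc, Equiv.apply_symm_apply]
    rw [h] at this
    exact (Fin.castSucc_lt_last y).ne this
  refine ⟨⟨fun i => (σ i.succ).castPred (hne i),
    fun y => (σ.symm y.castSucc).pred (hne' y), ?_, ?_⟩, ?_⟩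
  · intro i
    simp only [Fin.castSucc_castPred, Equiv.symm_apply_apply, Fin.pred_succ]
  · intro y
    simp only [Fin.succ_pred, Equiv.apply_symm_apply, Fin.castPred_castSucc]
  · apply Equiv.ext
    intro x
    induction x using Fin.cases with
    | zero => rw [extL_zero, h]
    | succ i =>
      rw [extL_succ]
      simp only [Equiv.coe_fn_mk, Fin.castSucc_castPred]

lemma surjR (j : ℕ) (σ : Equiv.Perm (Fin (j+2))) (h : σ (Fin.last (j+1)) = Fin.last (j+1)) :
    ∃ τ : Equiv.Perm (Fin (j+1)), extR j τ = σ := by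
  have hne : ∀ i : Fin (j+1), σ i.castSucc ≠ Fin.last (j+1) := by
    intro i hc
    have : σ i.castSucc = σ (Fin.last (j+1)) := by rw [hc, h]
    have := σ.injective this
    exact (Fin.castSucc_lt_last i).ne this
  have hne' : ∀ y : Fin (j+1), σ.symm y.castSucc ≠ Fin.last (j+1) := by
    intro y hc
    have : y.castSucc = σ (Fin.last (j+1)) := by rw [← hc, Equiv.apply_symm_apply]
    rw [h] at this
    exact (Fin.castSucc_lt_last y).ne this
  refine ⟨⟨fun i => (σ i.castSucc).castPred (hne i),
    fun y => (σ.symm y.castSucc).castPred (hne' y), ?_, ?_⟩, ?_⟩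
  · intro i
    simp only [Fin.castSucc_castPred, Equiv.symm_apply_apply, Fin.castPred_castSucc]
  · intro y
    simp only [Fin.castSucc_castPred, Equiv.apply_symm_apply, Fin.castPred_castSucc]
  · apply Equiv.ext
    intro x
    induction x using Fin.lastCases with
    | last => rw [extR_last, h]
    | cast i =>
      rw [extR_castSucc]
      simp only [Equiv.coe_fn_mk, Fin.castSucc_castPred]

lemma permSum (α : ℕ → ℤ) (j : ℕ) (τ : Equiv.Perm (Fin (j+1))) :
    ∑ s : Fin (j+1), α ((τ s : ℕ) + 1) = ∑ i ∈ Icc 1 (j+1), α i := by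
  rw [Equiv.sum_comp τ (fun s : Fin (j+1) => α ((s : ℕ) + 1))]
  rw [Fin.sum_univ_eq_sum_range (fun i => α (i+1)) (j+1)]
  rw [← Finset.Ico_add_one_right_eq_Icc, Finset.sum_Ico_eq_sum_range]
  refine Finset.sum_congr (by congr 1) fun i _ => by rw [Nat.add_comm 1 i]

lemma decompL (α β : ℕ → ℤ) (hβ : Monotone β) (j m : ℕ) (L R : ℤ)
    (τ : Equiv.Perm (Fin (j+1))) :
    stateVal α β (j+2) m L R (extL j τ)
      = stateVal α β (j+1) (m+1) (L + α (j+2)) R τ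
        + 2 * (L + α (j+2)) * ((∑ i ∈ Icc 1 (j+1), α i) + R) * (β (m+1) - β m) := by
  set σ : Equiv.Perm (Fin (j+2)) := extL j τ with hσ
  set w : ℕ → ℤ := wf α (j+1) L R σ with hwdef
  set x : ℕ → ℤ := cf β (j+1) m with hxdef
  have hb1 : stateVal α β (j+2) m L R σ = V (j+4) w x := bridge α β hβ (j+1) m L R σ
  have hb2 : stateVal α β (j+1) (m+1) (L + α (j+2)) R τ
      = V (j+3) (wf α j (L + α (j+2)) R τ) (cf β j (m+1)) :=
    bridge α β hβ j (m+1) (L + α (j+2)) R τ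
  have hxm : Monotone x := cf_mono hβ (j+1) m
  have h01 : x 0 = x 1 := by simp [hxdef, cf]
  have hVL : V (j+4) w x
      = V (j+3) (fun i => if i = 0 then w 0 + w 1 else w (i+1))
          (fun i => if i = 0 then x 2 else x (i+1))
        + 2 * (w 0 + w 1) * (∑ i ∈ range (j+2), w (i+2)) * (x 2 - x 0) :=
    VL (j+2) w x hxm h01
  -- evaluations of w
  have hw0 : w 0 = L := wf_eval0 α (j+1) L R σ
  have hw1 : w 1 = α (j+2) := by
    have h1 := wf_evalMid α (j+1) L R σ 0
    rw [← hwdef] at h1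
    simp only [Fin.val_zero, Nat.zero_add] at h1
    rw [h1, hσ, extL_zero]
    simp [Fin.last]
  have hwT : w (j+3) = R := wf_evalTop α (j+1) L R σ
  have hwmid : ∀ i : Fin (j+1), w ((i : ℕ) + 2) = α ((τ i : ℕ) + 1) := by
    intro i
    have h1 := wf_evalMid α (j+1) L R σ i.succ
    rw [← hwdef] at h1
    have h2 : ((i.succ : Fin (j+2)) : ℕ) + 1 = (i : ℕ) + 2 := by
      simp [Fin.val_succ]
    rw [h2] at h1
    rw [h1, hσ, extL_succ]
    simp
  -- shift sum
  have hshift : ∑ i ∈ range (j+2), w (i+2) = (∑ i ∈ Icc 1 (j+1), α i) + R := by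
    rw [Finset.sum_range_succ]
    have e1 : ∑ i ∈ range (j+1), w (i+2) = ∑ s : Fin (j+1), w ((s : ℕ) + 2) :=
      (Fin.sum_univ_eq_sum_range (fun i => w (i+2)) (j+1)).symm
    have e2 : ∑ s : Fin (j+1), w ((s : ℕ) + 2) = ∑ s : Fin (j+1), α ((τ s : ℕ) + 1) :=
      Finset.sum_congr rfl fun s _ => hwmid s
    rw [e1, e2, permSum α j τ]
    have : w (j+1+2) = R := hwT
    rw [this]
  -- identify the small V
  have hcong : V (j+3) (fun i => if i = 0 then w 0 + w 1 else w (i+1))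
      (fun i => if i = 0 then x 2 else x (i+1))
      = V (j+3) (wf α j (L + α (j+2)) R τ) (cf β j (m+1)) := by
    apply Vcongr
    · intro i hi
      rcases Nat.eq_zero_or_pos i with rfl | hpos
      · rw [wf_eval0]
        simp [hw0, hw1]
      rcases eq_or_ne i (j+2) with rfl | hne
      · rw [if_neg (by omega), hwT, wf_evalTop]
      · -- 1 ≤ i ≤ j+1
        have hile : i ≤ j + 1 := by omega
        rw [if_neg (by omega)]
        have h1 : w (i+1) = α ((τ ⟨i-1, by omega⟩ : ℕ) + 1) := by
          have := hwmid ⟨i-1, by omega⟩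
          simpa [show i - 1 + 2 = i + 1 from by omega] using this
        rw [h1]
        have h2 := wf_evalMid α j (L + α (j+2)) R τ ⟨i-1, by omega⟩
        simp only [show i - 1 + 1 = i from by omega] at h2
        rw [h2]
    · intro i hi
      rcases Nat.eq_zero_or_pos i with rfl | hpos
      · simp only [if_pos rfl, hxdef, cf]
        norm_num
      · rw [if_neg (by omega)]
        simp only [hxdef, cf]
        congr 1
        omega
  have hx2 : x 2 = β (m+1) := by simp [hxdef, cf]
  have hx0 : x 0 = β m := by simp [hxdef, cf]
  rw [hb1, hb2, hVL, hcong, hw0, hw1, hshift, hx2, hx0]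

lemma decompR (α β : ℕ → ℤ) (hβ : Monotone β) (j m : ℕ) (L R : ℤ)
    (τ : Equiv.Perm (Fin (j+1))) :
    stateVal α β (j+2) m L R (extR j τ)
      = stateVal α β (j+1) m L (R + α (j+2)) τ
        + 2 * (L + (∑ i ∈ Icc 1 (j+1), α i)) * (R + α (j+2)) * (β (m+j+1) - β (m+j)) := by
  set σ : Equiv.Perm (Fin (j+2)) := extR j τ with hσ
  set w : ℕ → ℤ := wf α (j+1) L R σ with hwdef
  set x : ℕ → ℤ := cf β (j+1) m with hxdef
  have hb1 : stateVal α β (j+2) m L R σ = V (j+4) w x := bridge α β hβ (j+1) m L R σ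
  have hb2 : stateVal α β (j+1) m L (R + α (j+2)) τ
      = V (j+3) (wf α j L (R + α (j+2)) τ) (cf β j m) :=
    bridge α β hβ j m L (R + α (j+2)) τ
  have hxm : Monotone x := cf_mono hβ (j+1) m
  have hlast : x (j+2) = x (j+3) := by
    simp only [hxdef, cf]
    congr 1
    omega
  have hVR : V (j+4) w x
      = V (j+3) (fun i => if i = j+2 then w (j+2) + w (j+3) else w i)
          (fun i => if i = j+2 then x (j+1) else x i)
        + 2 * (w (j+2) + w (j+3)) * (∑ i ∈ range (j+2), w i) * (x (j+2) - x (j+1)) :=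
    VR (j+1) w x hxm hlast
  have hw0 : w 0 = L := wf_eval0 α (j+1) L R σ
  have hwT : w (j+3) = R := wf_evalTop α (j+1) L R σ
  have hwJ2 : w (j+2) = α (j+2) := by
    have h1 := wf_evalMid α (j+1) L R σ (Fin.last (j+1))
    rw [← hwdef] at h1
    simp only [Fin.val_last] at h1
    have h1' : w (j+2) = α ((σ (Fin.last (j+1)) : ℕ) + 1) := h1
    rw [h1', hσ, extR_last]
    simp [Fin.last]
  have hwmid : ∀ i : Fin (j+1), w ((i : ℕ) + 1) = α ((τ i : ℕ) + 1) := by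
    intro i
    have h1 := wf_evalMid α (j+1) L R σ i.castSucc
    rw [← hwdef] at h1
    simp only [Fin.coe_castSucc] at h1
    rw [h1, hσ, extR_castSucc]
    simp
  have hshift : ∑ i ∈ range (j+2), w i = L + (∑ i ∈ Icc 1 (j+1), α i) := by
    rw [Finset.sum_range_succ']
    have e1 : ∑ i ∈ range (j+1), w (i+1) = ∑ s : Fin (j+1), w ((s : ℕ) + 1) :=
      (Fin.sum_univ_eq_sum_range (fun i => w (i+1)) (j+1)).symm
    have e2 : ∑ s : Fin (j+1), w ((s : ℕ) + 1) = ∑ s : Fin (j+1), α ((τ s : ℕ) + 1) :=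
      Finset.sum_congr rfl fun s _ => hwmid s
    rw [e1, e2, permSum α j τ, hw0]
    ring
  have hcong : V (j+3) (fun i => if i = j+2 then w (j+2) + w (j+3) else w i)
      (fun i => if i = j+2 then x (j+1) else x i)
      = V (j+3) (wf α j L (R + α (j+2)) τ) (cf β j m) := by
    apply Vcongr
    · intro i hi
      rcases eq_or_ne i (j+2) with rfl | hne
      · rw [if_pos rfl, hwJ2, hwT, wf_evalTop]
        ring
      rcases Nat.eq_zero_or_pos i with rfl | hpos
      · rw [if_neg hne, hw0, wf_eval0]
      · have hile : i ≤ j + 1 := by omega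
        rw [if_neg hne]
        have h1 : w i = α ((τ ⟨i-1, by omega⟩ : ℕ) + 1) := by
          have := hwmid ⟨i-1, by omega⟩
          simpa [show i - 1 + 1 = i from by omega] using this
        rw [h1]
        have h2 := wf_evalMid α j L (R + α (j+2)) τ ⟨i-1, by omega⟩
        simp only [show i - 1 + 1 = i from by omega] at h2
        rw [h2]
    · intro i hi
      rcases eq_or_ne i (j+2) with rfl | hne
      · rw [if_pos rfl]
        simp only [hxdef, cf]
        congr 1
        omega
      · rw [if_neg hne]
        simp only [hxdef, cf]
        congr 1
        omega
  have hxJ2 : x (j+2) = β (m+j+1) := by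
    simp only [hxdef, cf]
    congr 1
    omega
  have hxJ1 : x (j+1) = β (m+j) := by
    simp only [hxdef, cf]
    congr 1
    omega
  rw [hb1, hb2]
  rw [hVR, hcong, hwJ2, hwT, hshift, hxJ2, hxJ1]
  ring

lemma wf_nonneg (α : ℕ → ℤ) (K : ℕ) (L R : ℤ) (hα0 : ∀ i, 0 ≤ α i)
    (hL : 0 ≤ L) (hR : 0 ≤ R) (σ : Equiv.Perm (Fin (K+1))) :
    ∀ i, 0 ≤ wf α K L R σ i := by
  intro i
  rw [wf]
  split
  · exact hα0 _
  · split
    · exact hL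
    · exact hR

lemma finPerm_exists (j : ℕ) (π : Equiv.Perm ℕ)
    (hfix' : ∀ i, ¬(1 ≤ i ∧ i ≤ j+2) → π i = i) :
    ∃ f : Equiv.Perm (Fin (j+2)), ∀ s : Fin (j+2), (f s : ℕ) = π ((s : ℕ)+1) - 1 := by
  have hπin : ∀ i, 1 ≤ i → i ≤ j+2 → 1 ≤ π i ∧ π i ≤ j+2 := by
    intro i h1 h2
    by_contra hc
    have h3 : π (π i) = π i := hfix' (π i) hc
    have h4 : π i = i := π.injective h3
    rw [h4] at hc
    exact hc ⟨h1, h2⟩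
  have hfixs : ∀ i, ¬(1 ≤ i ∧ i ≤ j+2) → π.symm i = i := by
    intro i hi
    conv_lhs => rw [← hfix' i hi]
    exact Equiv.symm_apply_apply π i
  have hπins : ∀ i, 1 ≤ i → i ≤ j+2 → 1 ≤ π.symm i ∧ π.symm i ≤ j+2 := by
    intro i h1 h2
    by_contra hc
    have h3 : π.symm (π.symm i) = π.symm i := hfixs (π.symm i) hc
    have h4 : π.symm i = i := π.symm.injective h3
    rw [h4] at hc
    exact hc ⟨h1, h2⟩
  have hbound : ∀ s : Fin (j+2), π ((s : ℕ)+1) - 1 < j + 2 := by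
    intro s
    have := hπin ((s : ℕ)+1) (by omega) (by have := s.isLt; omega)
    omega
  have hbound' : ∀ s : Fin (j+2), π.symm ((s : ℕ)+1) - 1 < j + 2 := by
    intro s
    have := hπins ((s : ℕ)+1) (by omega) (by have := s.isLt; omega)
    omega
  refine ⟨{
    toFun := fun s => ⟨π ((s : ℕ)+1) - 1, hbound s⟩
    invFun := fun s => ⟨π.symm ((s : ℕ)+1) - 1, hbound' s⟩
    left_inv := by
      intro s
      apply Fin.ext
      have h1 := (hπin ((s : ℕ)+1) (by omega) (by have := s.isLt; omega)).1
      show π.symm (π ((s : ℕ)+1) - 1 + 1) - 1 = (s : ℕ)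
      rw [show π ((s : ℕ)+1) - 1 + 1 = π ((s : ℕ)+1) from by omega]
      rw [Equiv.symm_apply_apply]
      omega
    right_inv := by
      intro s
      apply Fin.ext
      have h1 := (hπins ((s : ℕ)+1) (by omega) (by have := s.isLt; omega)).1
      show π (π.symm ((s : ℕ)+1) - 1 + 1) - 1 = (s : ℕ)
      rw [show π.symm ((s : ℕ)+1) - 1 + 1 = π.symm ((s : ℕ)+1) from by omega]
      rw [Equiv.apply_symm_apply]
      omega }, fun s => rfl⟩


lemma wf_mid' (α : ℕ → ℤ) (j : ℕ) (L R : ℤ) (σ : Equiv.Perm (Fin (j+2))) :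
    ∀ i (h1 : 1 ≤ i) (h2 : i ≤ j + 2),
      wf α (j+1) L R σ i = α (((σ ⟨i-1, by omega⟩ : Fin (j+2)) : ℕ) + 1) := by
  intro i h1 h2
  have h3 := wf_evalMid α (j+1) L R σ ⟨i-1, by omega⟩
  simpa [show i - 1 + 1 = i from by omega] using h3

lemma wf_comp (α : ℕ → ℤ) (j : ℕ) (L R : ℤ) (σ f : Equiv.Perm (Fin (j+2)))
    (π : Equiv.Perm ℕ)
    (hfcoe : ∀ s : Fin (j+2), (f s : ℕ) = π ((s : ℕ)+1) - 1)
    (hfix' : ∀ i, ¬(1 ≤ i ∧ i ≤ j+2) → π i = i)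
    (hπin : ∀ i, 1 ≤ i → i ≤ j+2 → 1 ≤ π i ∧ π i ≤ j+2) :
    ∀ i, i < j+4 → (wf α (j+1) L R σ ∘ π) i = wf α (j+1) L R (f.trans σ) i := by
  intro i _
  by_cases hin : 1 ≤ i ∧ i ≤ j+2
  · obtain ⟨ha, hb⟩ := hπin i hin.1 hin.2
    have h1 : (wf α (j+1) L R σ ∘ π) i
        = α (((σ ⟨π i - 1, by omega⟩ : Fin (j+2)) : ℕ) + 1) := by
      show wf α (j+1) L R σ (π i) = _
      rw [wf_mid' α j L R σ (π i) ha hb]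
    have h2 := wf_mid' α j L R (f.trans σ) i hin.1 hin.2
    rw [h1, h2]
    have harg : f ⟨i-1, by omega⟩ = (⟨π i - 1, by omega⟩ : Fin (j+2)) := by
      apply Fin.ext
      rw [hfcoe ⟨i-1, by omega⟩]
      show π ((i-1) + 1) - 1 = π i - 1
      rw [show i - 1 + 1 = i from by omega]
    simp only [Equiv.trans_apply]
    rw [harg]
  · have hp : π i = i := hfix' i hin
    show wf α (j+1) L R σ (π i) = _
    rw [hp]
    rw [wf, wf]
    rw [dif_neg (by omega), dif_neg (by omega)]

set_option maxHeartbeats 1000000 in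
lemma exchange (α β : ℕ → ℤ) (hα0 : ∀ i, 0 ≤ α i) (hα : Monotone α)
    (hβ : Monotone β) (j m : ℕ) (L R : ℤ) (hL : 0 ≤ L) (hR : 0 ≤ R)
    (σ : Equiv.Perm (Fin (j+2))) :
    ∃ σ' : Equiv.Perm (Fin (j+2)),
      (σ' 0 = Fin.last (j+1) ∨ σ' (Fin.last (j+1)) = Fin.last (j+1)) ∧
      stateVal α β (j+2) m L R σ ≤ stateVal α β (j+2) m L R σ' := by
  set w : ℕ → ℤ := wf α (j+1) L R σ with hwdef
  set x : ℕ → ℤ := cf β (j+1) m with hxdef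
  have hxm : Monotone x := cf_mono hβ (j+1) m
  have hw0 : ∀ i, 0 ≤ w i := wf_nonneg α (j+1) L R hα0 hL hR σ
  set r : ℕ := ((σ.symm (Fin.last (j+1)) : Fin (j+2)) : ℕ) + 1 with hrdef
  have hr1 : 1 ≤ r := by omega
  have hrlt : r ≤ j + 2 := by
    have := (σ.symm (Fin.last (j+1))).isLt
    omega
  have hwr : w r = α (j+2) := by
    have h1 := wf_evalMid α (j+1) L R σ (σ.symm (Fin.last (j+1)))
    rw [← hwdef] at h1
    rw [← hrdef] at h1
    rw [h1, Equiv.apply_symm_apply, Fin.val_last]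
  have hwmid : ∀ i (h1 : 1 ≤ i) (h2 : i ≤ j + 2),
      w i = α (((σ ⟨i-1, by omega⟩ : Fin (j+2)) : ℕ) + 1) := wf_mid' α j L R σ
  have hmax : ∀ i, 1 ≤ i → i ≤ j + 2 → w i ≤ w r := by
    intro i h1 h2
    rw [hwr, hwmid i h1 h2]
    apply hα
    have := (σ ⟨i-1, by omega⟩).isLt
    omega
  obtain ⟨π, hfix, hor, hV⟩ := Vexchange (j+4) x w hxm hw0 r hr1 (by omega) (by
    intro i h1 h2
    exact hmax i h1 (by omega))
  have hfix' : ∀ i, ¬(1 ≤ i ∧ i ≤ j+2) → π i = i := fun i hi => hfix i (by omega)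
  have hπin : ∀ i, 1 ≤ i → i ≤ j+2 → 1 ≤ π i ∧ π i ≤ j+2 := by
    intro i h1 h2
    by_contra hc
    have h3 : π (π i) = π i := hfix' (π i) hc
    have h4 : π i = i := π.injective h3
    rw [h4] at hc
    exact hc ⟨h1, h2⟩
  obtain ⟨f, hfcoe⟩ := finPerm_exists j π hfix'
  refine ⟨f.trans σ, ?_, ?_⟩
  · rcases hor with h | h
    · left
      have hf0 : f 0 = σ.symm (Fin.last (j+1)) := by
        apply Fin.ext
        rw [hfcoe 0]
        have h0 : π (((0 : Fin (j+2)) : ℕ) + 1) = r := by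
          rw [Fin.val_zero]
          exact h
        rw [h0]
        omega
      show σ (f 0) = Fin.last (j+1)
      rw [hf0, Equiv.apply_symm_apply]
    · right
      have h' : π (j+2) = r := by
        have he : j + 4 - 2 = j + 2 := by omega
        rwa [he] at h
      have hfl : f (Fin.last (j+1)) = σ.symm (Fin.last (j+1)) := by
        apply Fin.ext
        rw [hfcoe (Fin.last (j+1))]
        have hl : π (((Fin.last (j+1)) : ℕ) + 1) = r := by
          rw [Fin.val_last]
          exact h'
        rw [hl]
        omega
      show σ (f (Fin.last (j+1))) = Fin.last (j+1)
      rw [hfl, Equiv.apply_symm_apply]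
  · have hb1 : stateVal α β (j+2) m L R σ = V (j+4) w x := bridge α β hβ (j+1) m L R σ
    have hb2 : stateVal α β (j+2) m L R (f.trans σ)
        = V (j+4) (wf α (j+1) L R (f.trans σ)) x := bridge α β hβ (j+1) m L R (f.trans σ)
    have hcomp : ∀ i, i < j+4 → (w ∘ π) i = wf α (j+1) L R (f.trans σ) i :=
      wf_comp α j L R σ f π hfcoe hfix' hπin
    calc stateVal α β (j+2) m L R σ = V (j+4) w x := hb1
      _ ≤ V (j+4) (w ∘ π) x := hV
      _ = V (j+4) (wf α (j+1) L R (f.trans σ)) x := Vcongr hcomp (fun i _ => rfl)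
      _ = stateVal α β (j+2) m L R (f.trans σ) := hb2.symm

/-- correctness of the dynamic programming recursion: for k ≥ 2,
with M = Σ_{i=1}^{k−1} α_i,
Z(k,m,L,R) = max{ Z(k−1,m+1,L+α_k,R) + 2(L+α_k)(M+R)(β_{m+1}−β_m),
                  Z(k−1,m,L,R+α_k) + 2(L+M)(R+α_k)(β_{m+k−1}−β_{m+k−2}) }. -/
theorem stmt9 (α β : ℕ → ℤ) (hα0 : ∀ i, 0 ≤ α i) (hα : Monotone α)
    (hβ : Monotone β) (n k m : ℕ) (hk2 : 2 ≤ k) (hkn : k ≤ n)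
    (hm1 : 1 ≤ m) (hmn : m ≤ n - k + 1) (L R : ℤ) (hL : 0 ≤ L) (hR : 0 ≤ R) :
    stateOpt α β k m L R =
      max
        (stateOpt α β (k - 1) (m + 1) (L + α k) R +
          2 * (L + α k) * ((∑ i ∈ Finset.Icc 1 (k - 1), α i) + R) * (β (m + 1) - β m))
        (stateOpt α β (k - 1) m L (R + α k) +
          2 * (L + (∑ i ∈ Finset.Icc 1 (k - 1), α i)) * (R + α k) *
            (β (m + k - 1) - β (m + k - 2))) := by
  obtain ⟨j, rfl⟩ : ∃ j, k = j + 2 := ⟨k - 2, by omega⟩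
  rw [show j + 2 - 1 = j + 1 from rfl]
  rw [show m + (j + 2) - 1 = m + j + 1 from by omega]
  rw [show m + (j + 2) - 2 = m + j from by omega]
  simp only [stateOpt]
  apply le_antisymm
  · apply Finset.sup'_le
    intro σ _
    obtain ⟨σ', hend, hle⟩ := exchange α β hα0 hα hβ j m L R hL hR σ
    rcases hend with h0 | hl
    · obtain ⟨τ, rfl⟩ := surjL j σ' h0
      refine le_trans hle ?_
      rw [decompL α β hβ j m L R τ]
      refine le_trans (add_le_add_left
        (Finset.le_sup' (stateVal α β (j+1) (m+1) (L + α (j+2)) R)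
          (Finset.mem_univ τ)) _) ?_
      exact le_max_left _ _
    · obtain ⟨τ, rfl⟩ := surjR j σ' hl
      refine le_trans hle ?_
      rw [decompR α β hβ j m L R τ]
      refine le_trans (add_le_add_left
        (Finset.le_sup' (stateVal α β (j+1) m L (R + α (j+2)))
          (Finset.mem_univ τ)) _) ?_
      exact le_max_right _ _
  · apply max_le
    · have h : ∀ τ : Equiv.Perm (Fin (j+1)),
          stateVal α β (j+1) (m+1) (L + α (j+2)) R τ
            ≤ (Finset.univ.sup' Finset.univ_nonempty (stateVal α β (j+2) m L R))
              - 2 * (L + α (j+2)) * ((∑ i ∈ Finset.Icc 1 (j+1), α i) + R)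
                * (β (m+1) - β m) := by
        intro τ
        have h1 := Finset.le_sup' (stateVal α β (j+2) m L R)
          (Finset.mem_univ (extL j τ))
        have h2 := decompL α β hβ j m L R τ
        linarith
      have h3 := Finset.sup'_le Finset.univ_nonempty
        (stateVal α β (j+1) (m+1) (L + α (j+2)) R) (fun τ _ => h τ)
      linarith [h3]
    · have h : ∀ τ : Equiv.Perm (Fin (j+1)),
          stateVal α β (j+1) m L (R + α (j+2)) τ
            ≤ (Finset.univ.sup' Finset.univ_nonempty (stateVal α β (j+2) m L R))
              - 2 * (L + (∑ i ∈ Finset.Icc 1 (j+1), α i)) * (R + α (j+2))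
                * (β (m+j+1) - β (m+j)) := by
        intro τ
        have h1 := Finset.le_sup' (stateVal α β (j+2) m L R)
          (Finset.mem_univ (extR j τ))
        have h2 := decompR α β hβ j m L R τ
        linarith
      have h3 := Finset.sup'_le Finset.univ_nonempty
        (stateVal α β (j+1) m L (R + α (j+2))) (fun τ _ => h τ)
      linarith [h3]
end

section
/- Among all trees on r vertices, the path P_r has the largest Wiener index and the star K_{1,r−1} has the smallest Wiener index; in particular W(K_{1,r−1}) = (r−1)² and W(P_r) = (r³−r)/6. -/
open Finset
open SimpleGraph hiding starGraph starGraph_adj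


/-- The star `K_{1,r−1}` on `Fin r`, with center `0`. -/
def starGraph (r : ℕ) : SimpleGraph (Fin r) :=
  SimpleGraph.fromRel (fun i _ => (i : ℕ) = 0)

variable {V : Type*} {G : SimpleGraph V}

/-- A walk staying inside `s` gives reachability in the induced graph. -/
lemma reachable_induce_of_walk {s : Set V} {u v : V} (p : G.Walk u v)
    (hp : ∀ x ∈ p.support, x ∈ s) (hu : u ∈ s) (hv : v ∈ s) :
    (G.induce s).Reachable ⟨u, hu⟩ ⟨v, hv⟩ := by
  induction p with
  | nil => exact Reachable.refl _
  | cons h q ih =>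
      rename_i a b c
      have hb : b ∈ s := hp b (by simp [SimpleGraph.Walk.support_cons])
      have : (G.induce s).Adj ⟨a, hu⟩ ⟨b, hb⟩ := by
        simp [SimpleGraph.comap_adj, h]
      exact (this.reachable).trans (ih (fun x hx => hp x (by simp [SimpleGraph.Walk.support_cons, hx])) hb hv)

lemma dist_le_dist_induce {s : Set V} {u v : s} (h : (G.induce s).Reachable u v) :
    G.dist u.1 v.1 ≤ (G.induce s).dist u v := by
  obtain ⟨p, hp⟩ := h.exists_walk_length_eq_dist
  rw [← hp]
  have := SimpleGraph.dist_le
    (p.map (⟨Subtype.val, fun {a b} h => by simpa using h⟩ : G.induce s →g G))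
  simpa using this

attribute [local instance] Classical.propDecidable

/-- Balls grow in a connected graph. -/
lemma ball_card_ge [Fintype V] (hG : G.Connected) (v : V) (k : ℕ) :
    min (k + 1) (Fintype.card V) ≤ #(Finset.univ.filter (fun u => G.dist v u ≤ k)) := by
  induction k with
  | zero =>
      have hv : v ∈ Finset.univ.filter (fun u => G.dist v u ≤ 0) := by simp
      calc min 1 (Fintype.card V) ≤ 1 := min_le_left _ _
        _ ≤ _ := Finset.card_pos.mpr ⟨v, hv⟩
  | succ k ih =>
      by_cases hS : (Finset.univ.filter (fun u => G.dist v u ≤ k)) = Finset.univ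
      · have hsub : (Finset.univ.filter (fun u => G.dist v u ≤ k)) ⊆
            (Finset.univ.filter (fun u => G.dist v u ≤ k + 1)) :=
          by intro u hu
             simp only [Finset.mem_filter] at hu ⊢
             exact ⟨hu.1, by omega⟩
        calc min (k + 2) (Fintype.card V) ≤ Fintype.card V := min_le_right _ _
          _ = #(Finset.univ.filter (fun u => G.dist v u ≤ k)) := by
              rw [hS, Finset.card_univ]
          _ ≤ _ := Finset.card_le_card hsub
      · obtain ⟨w, hw⟩ : ∃ w, ¬ G.dist v w ≤ k := by
          by_contra h
          push_neg at h
          exact hS (Finset.eq_univ_of_forall (fun u => by simp [h u]))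
        obtain ⟨p⟩ := hG.preconnected v w
        obtain ⟨d, _, hd1, hd2⟩ := p.exists_boundary_dart
          {u : V | G.dist v u ≤ k} (by simp [SimpleGraph.dist_self]) (by simpa using hw)
        have hdist : G.dist v d.snd ≤ k + 1 := by
          calc G.dist v d.snd ≤ G.dist v d.fst + G.dist d.fst d.snd := hG.dist_triangle
            _ ≤ k + 1 := by
                have : G.dist d.fst d.snd = 1 := SimpleGraph.dist_eq_one_iff_adj.mpr d.adj
                have h1 : G.dist v d.fst ≤ k := hd1
                omega
        have hsub : insert d.snd (Finset.univ.filter (fun u => G.dist v u ≤ k)) ⊆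
            (Finset.univ.filter (fun u => G.dist v u ≤ k + 1)) := by
          intro x hx
          rcases Finset.mem_insert.mp hx with h | h
          · subst h; simp [hdist]
          · simp only [Finset.mem_filter] at h ⊢
            exact ⟨h.1, by omega⟩
        have hnotmem : d.snd ∉ (Finset.univ.filter (fun u => G.dist v u ≤ k)) := by
          simp only [Finset.mem_filter]
          push_neg
          intro _
          simpa using hd2
        calc min (k + 1 + 1) (Fintype.card V)
            ≤ min (k + 1) (Fintype.card V) + 1 := by omega
          _ ≤ #(Finset.univ.filter (fun u => G.dist v u ≤ k)) + 1 := by omega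
          _ = #(insert d.snd (Finset.univ.filter (fun u => G.dist v u ≤ k))) :=
              (Finset.card_insert_of_notMem hnotmem).symm
          _ ≤ _ := Finset.card_le_card hsub

lemma sum_dist_le [Fintype V] (hG : G.Connected) (v : V) :
    2 * (∑ u, G.dist v u) ≤ Fintype.card V * (Fintype.card V - 1) := by
  set n := Fintype.card V with hn
  have hlt : ∀ u, G.dist v u < n := by
    intro u
    obtain ⟨p, hp, hlen⟩ := hG.exists_path_of_dist v u
    rw [← hlen]
    exact hp.length_lt
  have hrow : ∀ u, G.dist v u = ∑ k ∈ Finset.range n, (if ¬ (G.dist v u ≤ k) then 1 else 0) := by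
    intro u
    rw [Finset.sum_boole, Nat.cast_id]
    have : (Finset.range n).filter (fun k => ¬ (G.dist v u ≤ k)) = Finset.range (G.dist v u) := by
      ext k
      simp only [Finset.mem_filter, Finset.mem_range, not_le]
      have := hlt u
      omega
    rw [this, Finset.card_range]
  have key : (∑ u, G.dist v u) = ∑ k ∈ Finset.range n,
      #(Finset.univ.filter (fun u => ¬ (G.dist v u ≤ k))) := by
    rw [Finset.sum_congr rfl (fun u _ => hrow u), Finset.sum_comm]
    exact Finset.sum_congr rfl (fun k _ => by rw [Finset.sum_boole, Nat.cast_id])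
  have hbound : ∀ k, #(Finset.univ.filter (fun u => ¬ (G.dist v u ≤ k))) ≤ n - (k + 1) := by
    intro k
    have hc := Finset.card_filter_add_card_filter_not (s := Finset.univ)
      (p := fun u => G.dist v u ≤ k)
    have hb := ball_card_ge hG v k
    rw [Finset.card_univ] at hc
    omega
  calc 2 * (∑ u, G.dist v u) ≤ 2 * ∑ k ∈ Finset.range n, (n - (k+1)) := by
        rw [key]
        exact Nat.mul_le_mul_left 2 (Finset.sum_le_sum (fun k _ => hbound k))
    _ = 2 * ∑ k ∈ Finset.range n, k := by
        congr 1
        rw [← Finset.sum_range_reflect]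
        exact Finset.sum_congr rfl (fun k hk => by
          have := Finset.mem_range.mp hk; omega)
    _ = n * (n - 1) := by rw [mul_comm]; exact Finset.sum_range_id_mul_two n


lemma total_dist_le : ∀ (n : ℕ) (V : Type) [Fintype V] [DecidableEq V] (G : SimpleGraph V),
    Fintype.card V = n → G.Connected → 3 * (∑ u, ∑ w, G.dist u w) + n ≤ n ^ 3 := by
  intro n
  induction n using Nat.strong_induction_on with
  | _ n ih =>
  intro V _ _ G hcard hG
  rcases n with _ | _ | m
  · have : IsEmpty V := Fintype.card_eq_zero_iff.mp hcard
    simp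
  · have hsub : Subsingleton V := Fintype.card_le_one_iff_subsingleton.mp (le_of_eq hcard)
    have : (∑ u, ∑ w, G.dist u w) = 0 := by
      apply Finset.sum_eq_zero; intro u _
      apply Finset.sum_eq_zero; intro w _
      rw [Subsingleton.elim u w, SimpleGraph.dist_self]
    rw [this]
    norm_num
  · -- n = m + 2
    have hne : Nonempty V := Fintype.card_pos_iff.mp (by omega)
    obtain ⟨w⟩ := hne
    have herase : (Finset.univ.erase w).Nonempty := by
      rw [← Finset.card_pos, Finset.card_erase_of_mem (Finset.mem_univ w), Finset.card_univ]
      omega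
    obtain ⟨v, hv_mem, hmax⟩ := Finset.exists_max_image (Finset.univ.erase w) (fun u => G.dist w u) herase
    have hvw : v ≠ w := Finset.ne_of_mem_erase hv_mem
    have avoid : ∀ u : V, u ≠ v → ∃ p : G.Walk w u, v ∉ p.support := by
      intro u hu
      by_cases huw : u = w
      · subst huw
        exact ⟨SimpleGraph.Walk.nil, by simp [hvw]⟩
      · obtain ⟨p, hpath, hlen⟩ := hG.exists_path_of_dist w u
        by_cases hvp : v ∈ p.support
        · exfalso
          have hq : G.dist w v ≤ (p.takeUntil v hvp).length := SimpleGraph.dist_le _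
          have hsplit : (p.takeUntil v hvp).length + (p.dropUntil v hvp).length = p.length := by
            rw [← SimpleGraph.Walk.length_append, SimpleGraph.Walk.take_spec]
          have hr : (p.dropUntil v hvp).length ≠ 0 := by
            intro h0
            exact hu (SimpleGraph.Walk.eq_of_length_eq_zero h0).symm
          have hmx : G.dist w u ≤ G.dist w v :=
            hmax u (Finset.mem_erase.mpr ⟨huw, Finset.mem_univ u⟩)
          omega
        · exact ⟨p, hvp⟩
    set s : Set V := {u | u ≠ v} with hs
    have hws : w ∈ s := Ne.symm hvw
    have hreach : ∀ (u : V) (hu : u ∈ s), (G.induce s).Reachable ⟨w, hws⟩ ⟨u, hu⟩ := by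
      intro u hu
      obtain ⟨p, hp⟩ := avoid u hu
      exact reachable_induce_of_walk p (fun x hx => fun (hxv : x = v) => hp (hxv ▸ hx)) hws hu
    have hconn' : (G.induce s).Connected := by
      have : Nonempty s := ⟨⟨w, hws⟩⟩
      constructor
      intro a b
      exact ((hreach a.1 a.2).symm).trans (hreach b.1 b.2)
    have hcard' : Fintype.card s = m + 1 := by
      have h1 : Fintype.card s = Fintype.card {u : V // u ≠ v} := Fintype.card_congr (Equiv.refl _)
      rw [h1, Fintype.card_subtype_compl, Fintype.card_subtype_eq]
      omega
    have IH := ih (m+1) (by omega) s (G.induce s) hcard' hconn'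
    set A := ∑ u ∈ Finset.univ.erase v, ∑ x ∈ Finset.univ.erase v, G.dist u x with hA
    set S := ∑ u, G.dist v u with hS
    have hsplit : (∑ u, ∑ x, G.dist u x) = A + 2 * S := by
      have hrow : ∀ u : V, (∑ x, G.dist u x) = G.dist u v + ∑ x ∈ Finset.univ.erase v, G.dist u x :=
        fun u => (Finset.add_sum_erase _ _ (Finset.mem_univ v)).symm
      rw [← Finset.add_sum_erase _ _ (Finset.mem_univ v), hrow v, SimpleGraph.dist_self]
      have hmid : ∑ u ∈ Finset.univ.erase v, (∑ x, G.dist u x)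
          = (∑ u ∈ Finset.univ.erase v, G.dist u v) + A := by
        rw [hA, ← Finset.sum_add_distrib]
        exact Finset.sum_congr rfl (fun u _ => hrow u)
      rw [hmid]
      have h1 : (∑ u ∈ Finset.univ.erase v, G.dist u v)
          = ∑ u ∈ Finset.univ.erase v, G.dist v u :=
        Finset.sum_congr rfl (fun u _ => SimpleGraph.dist_comm)
      have h2 : S = G.dist v v + ∑ u ∈ Finset.univ.erase v, G.dist v u :=
        (Finset.add_sum_erase _ _ (Finset.mem_univ v)).symm
      rw [SimpleGraph.dist_self] at h2
      omega
    have hmem : ∀ x : V, x ∈ Finset.univ.erase v ↔ x ∈ s := by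
      intro x; simp [hs]
    have hAle : A ≤ ∑ u : s, ∑ x : s, (G.induce s).dist u x := by
      have e : A = ∑ u : s, ∑ x : s, G.dist u.1 x.1 := by
        rw [hA, Finset.sum_subtype (Finset.univ.erase v) hmem
          (fun u => ∑ x ∈ Finset.univ.erase v, G.dist u x)]
        exact Finset.sum_congr rfl
          (fun u _ => Finset.sum_subtype (Finset.univ.erase v) hmem (fun x => G.dist u.1 x))
      rw [e]
      exact Finset.sum_le_sum (fun u _ => Finset.sum_le_sum
        (fun x _ => dist_le_dist_induce (hconn'.preconnected u x)))
    have hSle : 2 * S ≤ (m + 2) * (m + 1) := by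
      have h2 := sum_dist_le hG v
      rw [hcard] at h2
      norm_num at h2
      exact h2
    rw [hsplit]
    have e1 : ((m:ℕ)+1+1)^3 = (m+1)^3 + (3 * ((m+2) * (m+1)) + 1) := by ring
    linarith [hAle, hSle, IH]


lemma starGraph_adj {r : ℕ} {u v : Fin r} :
    (starGraph r).Adj u v ↔ u ≠ v ∧ ((u : ℕ) = 0 ∨ (v : ℕ) = 0) := by
  simp [starGraph, SimpleGraph.fromRel_adj]

lemma starGraph_connected {r : ℕ} (hr : 1 ≤ r) : (starGraph r).Connected := by
  set z0 : Fin r := ⟨0, hr⟩ with hz0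
  have hreach : ∀ u : Fin r, (starGraph r).Reachable z0 u := by
    intro u
    by_cases h : u = z0
    · subst h; exact SimpleGraph.Reachable.refl _
    · exact (starGraph_adj.mpr ⟨Ne.symm h, Or.inl rfl⟩).reachable
  rw [SimpleGraph.connected_iff]
  exact ⟨fun a b => ((hreach a).symm).trans (hreach b), ⟨z0⟩⟩

lemma starGraph_dist {r : ℕ} (hr : 1 ≤ r) (u v : Fin r) :
    (starGraph r).dist u v =
      if u = v then 0 else if (u : ℕ) = 0 ∨ (v : ℕ) = 0 then 1 else 2 := by
  set z0 : Fin r := ⟨0, hr⟩ with hz0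
  split_ifs with h1 h2
  · subst h1; exact SimpleGraph.dist_self
  · exact SimpleGraph.dist_eq_one_iff_adj.mpr (starGraph_adj.mpr ⟨h1, h2⟩)
  · push_neg at h2
    have huz : u ≠ z0 := by
      intro h; apply h2.1; rw [h]
    have hvz : v ≠ z0 := by
      intro h; apply h2.2; rw [h]
    have hle : (starGraph r).dist u v ≤ 2 := by
      simpa using SimpleGraph.dist_le
        (SimpleGraph.Walk.cons (starGraph_adj.mpr ⟨huz, Or.inr rfl⟩)
          (SimpleGraph.Walk.cons (starGraph_adj.mpr ⟨Ne.symm hvz, Or.inl rfl⟩)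
            SimpleGraph.Walk.nil))
    have hpos : 0 < (starGraph r).dist u v :=
      (starGraph_connected hr).pos_dist_of_ne h1
    have hne1 : (starGraph r).dist u v ≠ 1 := by
      intro h
      have := SimpleGraph.dist_eq_one_iff_adj.mp h
      rw [starGraph_adj] at this
      exact absurd this.2 (by push_neg; exact h2)
    omega

lemma starGraph_sum {r : ℕ} (hr : 1 ≤ r) :
    (∑ u, ∑ v, (starGraph r).dist u v) = 2 * (r - 1)^2 := by
  set z0 : Fin r := ⟨0, hr⟩ with hz0
  have hrow0 : (∑ v, (starGraph r).dist z0 v) = r - 1 := by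
    rw [← Finset.add_sum_erase _ _ (Finset.mem_univ z0), SimpleGraph.dist_self, zero_add]
    have hc : (∑ v ∈ Finset.univ.erase z0, (starGraph r).dist z0 v)
        = ∑ _v ∈ Finset.univ.erase z0, 1 := by
      refine Finset.sum_congr rfl (fun v hv => ?_)
      rw [starGraph_dist hr]
      have : z0 ≠ v := Ne.symm (Finset.ne_of_mem_erase hv)
      simp +zetaDelta [this]
    rw [hc, Finset.sum_const, Finset.card_erase_of_mem (Finset.mem_univ z0),
      Finset.card_univ, Fintype.card_fin, smul_eq_mul, mul_one]
  have hrow : ∀ u : Fin r, u ≠ z0 → (∑ v, (starGraph r).dist u v) = 1 + 2 * (r - 2) := by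
    intro u hu
    have huv : (u : ℕ) ≠ 0 := by
      intro h; exact hu (Fin.ext h)
    have hz0u : z0 ∈ Finset.univ.erase u := Finset.mem_erase.mpr ⟨Ne.symm hu, Finset.mem_univ _⟩
    rw [← Finset.add_sum_erase _ _ (Finset.mem_univ u), SimpleGraph.dist_self, zero_add,
      ← Finset.add_sum_erase _ _ hz0u]
    have h1 : (starGraph r).dist u z0 = 1 := by
      rw [starGraph_dist hr]
      simp +zetaDelta [Ne.symm (Finset.ne_of_mem_erase hz0u), hu]
    have hc : (∑ v ∈ (Finset.univ.erase u).erase z0, (starGraph r).dist u v)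
        = ∑ _v ∈ (Finset.univ.erase u).erase z0, 2 := by
      refine Finset.sum_congr rfl (fun v hv => ?_)
      obtain ⟨hvz, hvu⟩ := Finset.mem_erase.mp hv
      obtain ⟨hvu', _⟩ := Finset.mem_erase.mp hvu
      have hv0 : (v : ℕ) ≠ 0 := fun h => hvz (Fin.ext h)
      rw [starGraph_dist hr]
      simp [Ne.symm hvu', huv, hv0]
    rw [h1, hc, Finset.sum_const, Finset.card_erase_of_mem hz0u,
      Finset.card_erase_of_mem (Finset.mem_univ u), Finset.card_univ, Fintype.card_fin,
      smul_eq_mul]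
    have : r - 1 - 1 = r - 2 := by omega
    rw [this, mul_comm]
  rw [← Finset.add_sum_erase _ _ (Finset.mem_univ z0), hrow0,
    Finset.sum_congr rfl (fun u hu => hrow u (Finset.ne_of_mem_erase hu)),
    Finset.sum_const, Finset.card_erase_of_mem (Finset.mem_univ z0),
    Finset.card_univ, Fintype.card_fin, smul_eq_mul]
  obtain ⟨m, rfl⟩ : ∃ m, r = m + 1 := ⟨r - 1, by omega⟩
  rcases m with _ | k
  · norm_num
  · have e1 : (k + 1 + 1) - 1 = k + 1 := by omega
    have e2 : (k + 1 + 1) - 2 = k := by omega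
    rw [e1, e2]
    ring


lemma tree_lower {V : Type*} [Fintype V] [DecidableEq V] {T : SimpleGraph V} (hT : T.IsTree) :
    2 * (Fintype.card V - 1)^2 ≤ ∑ u, ∑ w, T.dist u w := by
  classical
  set n := Fintype.card V with hn
  have hconn : T.Connected := hT.isConnected
  have hne : Nonempty V := hconn.nonempty
  have hn1 : 1 ≤ n := Fintype.card_pos
  -- number of ordered adjacent pairs
  have hadjsum : (∑ u, ∑ w, (if T.Adj u w then 1 else 0)) = 2 * (n - 1) := by
    have hdeg : ∀ u : V, (∑ w, (if T.Adj u w then 1 else 0)) = T.degree u := by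
      intro u
      rw [Finset.sum_boole, Nat.cast_id, ← SimpleGraph.neighborFinset_eq_filter]
      rfl
    rw [Finset.sum_congr rfl (fun u (_ : u ∈ Finset.univ) => hdeg u),
      SimpleGraph.sum_degrees_eq_twice_card_edges]
    have h4 := hT.card_edgeFinset
    omega
  have hconst : (∑ u : V, ∑ w : V, (if u = w then 0 else 2)) = n * (2 * (n - 1)) := by
    rw [Finset.sum_congr rfl (fun u (_ : u ∈ Finset.univ) => ?_), Finset.sum_const,
      Finset.card_univ, smul_eq_mul]
    rw [← Finset.add_sum_erase _ _ (Finset.mem_univ u), if_pos rfl, zero_add]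
    have hc : (∑ w ∈ Finset.univ.erase u, (if u = w then 0 else 2))
        = ∑ _w ∈ Finset.univ.erase u, 2 := by
      refine Finset.sum_congr rfl (fun w hw => ?_)
      rw [if_neg (Ne.symm (Finset.ne_of_mem_erase hw))]
    rw [hc, Finset.sum_const, Finset.card_erase_of_mem (Finset.mem_univ u),
      Finset.card_univ, smul_eq_mul, mul_comm]
  have hpoint : ∀ u w : V, (if u = w then 0 else 2) ≤ T.dist u w + (if T.Adj u w then 1 else 0) := by
    intro u w
    by_cases huw : u = w
    · simp [huw]
    · by_cases hadj : T.Adj u w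
      · have : T.dist u w = 1 := SimpleGraph.dist_eq_one_iff_adj.mpr hadj
        simp [huw, hadj, this]
      · have h1 : 0 < T.dist u w := hconn.pos_dist_of_ne huw
        have h2 : T.dist u w ≠ 1 := fun h => hadj (SimpleGraph.dist_eq_one_iff_adj.mp h)
        simp only [if_neg huw, if_neg hadj]
        omega
  have hsum : (∑ u : V, ∑ w : V, (if u = w then 0 else 2))
      ≤ (∑ u, ∑ w, T.dist u w) + ∑ u, ∑ w, (if T.Adj u w then 1 else 0) := by
    rw [← Finset.sum_add_distrib]
    refine Finset.sum_le_sum (fun u _ => ?_)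
    rw [← Finset.sum_add_distrib]
    exact Finset.sum_le_sum (fun w _ => hpoint u w)
  rw [hconst, hadjsum] at hsum
  obtain ⟨m, hm⟩ : ∃ m, n = m + 1 := ⟨n - 1, by omega⟩
  rw [hm] at hsum ⊢
  have e1 : (m + 1) * (2 * (m + 1 - 1)) = 2*m^2 + 2*m := by
    simp only [Nat.add_sub_cancel]; ring
  have e2 : 2 * ((m+1) - 1)^2 = 2*m^2 := by
    simp only [Nat.add_sub_cancel]
  omega

-- Path graph distance
lemma pathGraph_walk_lower {r : ℕ} {i j : Fin r} (p : (SimpleGraph.pathGraph r).Walk i j) :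
    Nat.dist i.val j.val ≤ p.length := by
  induction p with
  | nil => simp [Nat.dist_self]
  | cons h q ih =>
      rename_i a b c
      rw [SimpleGraph.pathGraph_adj] at h
      rw [SimpleGraph.Walk.length_cons]
      have := ih
      simp only [Nat.dist] at *
      omega

lemma pathGraph_dist_le_aux {r : ℕ} (hc : (SimpleGraph.pathGraph r).Connected) :
    ∀ d : ℕ, ∀ i j : Fin r, i.val ≤ j.val → j.val - i.val = d →
      (SimpleGraph.pathGraph r).dist i j ≤ d := by
  intro d
  induction d with
  | zero =>
      intro i j h1 h2
      have : i = j := Fin.ext (by omega)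
      subst this
      simp [SimpleGraph.dist_self]
  | succ d ihd =>
      intro i j h1 h2
      have hij : i.val < j.val := by omega
      have hk : i.val + 1 < r := lt_of_le_of_lt hij j.isLt
      set k : Fin r := ⟨i.val + 1, hk⟩ with hkdef
      have hadj : (SimpleGraph.pathGraph r).Adj i k :=
        SimpleGraph.pathGraph_adj.mpr (Or.inl rfl)
      calc (SimpleGraph.pathGraph r).dist i j
          ≤ (SimpleGraph.pathGraph r).dist i k + (SimpleGraph.pathGraph r).dist k j :=
            hc.dist_triangle
        _ ≤ 1 + d := by
            have h1' : (SimpleGraph.pathGraph r).dist i k = 1 :=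
              SimpleGraph.dist_eq_one_iff_adj.mpr hadj
            have h2' : (SimpleGraph.pathGraph r).dist k j ≤ d :=
              ihd k j (by simp [hkdef]; omega) (by simp [hkdef]; omega)
            omega
        _ = d + 1 := by omega

lemma pathGraph_dist {r : ℕ} (i j : Fin r) :
    (SimpleGraph.pathGraph r).dist i j = Nat.dist i.val j.val := by
  rcases r with _ | n
  · exact i.elim0
  have hc : (SimpleGraph.pathGraph (n+1)).Connected := SimpleGraph.pathGraph_connected n
  refine le_antisymm ?_ ?_
  · rcases le_total i.val j.val with h | h
    · rw [Nat.dist_eq_sub_of_le h]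
      exact pathGraph_dist_le_aux hc _ i j h rfl
    · rw [Nat.dist_comm, Nat.dist_eq_sub_of_le h, SimpleGraph.dist_comm]
      exact pathGraph_dist_le_aux hc _ j i h rfl
  · obtain ⟨p, hp⟩ := (hc.preconnected i j).exists_walk_length_eq_dist
    rw [← hp]
    exact pathGraph_walk_lower p

lemma natdist_sum : ∀ r : ℕ, 3 * (∑ i : Fin r, ∑ j : Fin r, Nat.dist i.val j.val) + r = r^3 := by
  intro r
  induction r with
  | zero => simp
  | succ n ihn =>
      set B := ∑ j : Fin n, (n - j.val) with hB
      have h2B : 2 * B = n * (n + 1) := by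
        have hBr : B = ∑ k ∈ Finset.range n, (n - k) := by
          rw [hB, Finset.sum_range fun k => n - k]
        have hrefl : (∑ k ∈ Finset.range n, (n - k)) = ∑ k ∈ Finset.range n, (k + 1) := by
          rw [← Finset.sum_range_reflect]
          exact Finset.sum_congr rfl (fun k hk => by
            have := Finset.mem_range.mp hk; omega)
        have hgauss : (∑ k ∈ Finset.range n, k) * 2 = n * (n - 1) :=
          Finset.sum_range_id_mul_two n
        have hsplit : (∑ k ∈ Finset.range n, (k + 1)) = (∑ k ∈ Finset.range n, k) + n := by
          rw [Finset.sum_add_distrib, Finset.sum_const, Finset.card_range, smul_eq_mul, mul_one]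
        have hnn : n * (n+1) = n * (n-1) + 2 * n := by
          rcases n with _ | m
          · simp
          · simp only [Nat.add_sub_cancel]; ring
        omega
      have hrow1 : ∀ i : Fin n,
          (∑ j : Fin (n+1), Nat.dist (Fin.castSucc i).val j.val)
          = (∑ j : Fin n, Nat.dist i.val j.val) + (n - i.val) := by
        intro i
        rw [Fin.sum_univ_castSucc]
        congr 1
        have hi := i.isLt
        simp only [Fin.coe_castSucc, Fin.val_last, Nat.dist]
        omega
      have hrow2 : (∑ j : Fin (n+1), Nat.dist (Fin.last n).val j.val) = B + 0 := by
        rw [Fin.sum_univ_castSucc, hB]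
        congr 1
        · refine Finset.sum_congr rfl (fun j _ => ?_)
          have hj := j.isLt
          simp only [Fin.coe_castSucc, Fin.val_last, Nat.dist]
          omega
        · simp [Nat.dist_self]
      have htot : (∑ i : Fin (n+1), ∑ j : Fin (n+1), Nat.dist i.val j.val)
          = (∑ i : Fin n, ∑ j : Fin n, Nat.dist i.val j.val) + 2 * B := by
        rw [Fin.sum_univ_castSucc, hrow2,
          Finset.sum_congr rfl (fun i (_ : i ∈ Finset.univ) => hrow1 i),
          Finset.sum_add_distrib]
        have : (∑ i : Fin n, (n - i.val)) = B := rfl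
        rw [this]
        omega
      rw [htot]
      have e : (n+1)^3 = n^3 + 3*(n*(n+1)) + 1 := by ring
      linarith [ihn, h2B, e]

lemma pathGraph_sum (r : ℕ) :
    3 * (∑ i, ∑ j, (SimpleGraph.pathGraph r).dist i j) + r = r^3 := by
  rw [Finset.sum_congr rfl (fun i (_ : i ∈ Finset.univ) =>
    Finset.sum_congr rfl (fun j (_ : j ∈ Finset.univ) => pathGraph_dist i j))]
  exact natdist_sum r


lemma wienerIndex_cast {V : Type*} [Fintype V] (G : SimpleGraph V) :
    wienerIndex G = ((∑ u, ∑ v, G.dist u v : ℕ) : ℚ) / 2 := by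
  unfold wienerIndex
  congr 1
  push_cast
  rfl

/-- among all trees on r vertices the path has the largest and
the star the smallest Wiener index; moreover W(K_{1,r−1}) = (r−1)² and
W(P_r) = (r³−r)/6. -/
theorem stmt10 (r : ℕ) (hr : 1 ≤ r) :
    (∀ T : SimpleGraph (Fin r), T.IsTree →
        wienerIndex (starGraph r) ≤ wienerIndex T ∧
        wienerIndex T ≤ wienerIndex (SimpleGraph.pathGraph r)) ∧
    wienerIndex (starGraph r) = ((r : ℚ) - 1) ^ 2 ∧
    wienerIndex (SimpleGraph.pathGraph r) = ((r : ℚ) ^ 3 - r) / 6 := by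
  have hpath := pathGraph_sum r
  have hstar := starGraph_sum hr
  refine ⟨fun T hT => ⟨?_, ?_⟩, ?_, ?_⟩
  · rw [wienerIndex_cast, wienerIndex_cast]
    have hle : (∑ u, ∑ v, (starGraph r).dist u v) ≤ ∑ u, ∑ w, T.dist u w := by
      rw [hstar]
      simpa [Fintype.card_fin] using tree_lower hT
    have hle' : ((∑ u, ∑ v, (starGraph r).dist u v : ℕ) : ℚ)
        ≤ ((∑ u, ∑ w, T.dist u w : ℕ) : ℚ) := by exact_mod_cast hle
    linarith
  · rw [wienerIndex_cast, wienerIndex_cast]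
    have hT' := total_dist_le r (Fin r) T (Fintype.card_fin r) hT.isConnected
    have hle : (∑ u, ∑ w, T.dist u w) ≤ ∑ i, ∑ j, (SimpleGraph.pathGraph r).dist i j := by
      omega
    have hle' : ((∑ u, ∑ w, T.dist u w : ℕ) : ℚ)
        ≤ ((∑ i, ∑ j, (SimpleGraph.pathGraph r).dist i j : ℕ) : ℚ) := by exact_mod_cast hle
    linarith
  · rw [wienerIndex_cast, hstar, Nat.cast_mul, Nat.cast_pow, Nat.cast_sub hr]
    push_cast
    ring
  · rw [wienerIndex_cast]
    have hc : 3 * ((∑ i, ∑ j, (SimpleGraph.pathGraph r).dist i j : ℕ) : ℚ) + (r : ℚ)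
        = (r : ℚ) ^ 3 := by
      exact_mod_cast congrArg (Nat.cast : ℕ → ℚ) hpath
    linarith
end
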